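/- arXiv:1309.5816 — 6 statements merged into one kernel-verified Lean document; each statement's English description precedes it below -/
import Mathlib

section
/- The map from 𝒮ⁿ (with the product topology) to 𝒮 sending an n-tuple of nonincreasing summable nonnegative sequences (s^{(1)}, …, s^{(n)}) to the decreasing rearrangement of the combined collection {s_j^{(i)} : 1 ≤ i ≤ n, j ≥ 1} is continuous. -/
open Filter Topology MeasureTheory Set
open scoped ENNReal NNReal

/-- The space `𝒮` of nonincreasing summable sequences of nonnegative reals,
realised as a subset of `ℓ¹`, so that it inherits the `ℓ¹` (induced) topology. -/
def FragS : Set (lp (fun _ : ℕ => ℝ) 1) :=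
  {f | Antitone (f : ℕ → ℝ) ∧ ∀ i, 0 ≤ (f : ℕ → ℝ) i}

namespace StmtAux

/-- Indicator (in `ℝ≥0∞`) of the event that `t` separates `f j` from `g j`. -/
noncomputable def D (f g : lp (fun _ : ℕ => ℝ) 1) (j : ℕ) (t : ℝ) : ℝ≥0∞ :=
  Set.indicator {t' : ℝ | (t' < (f : ℕ → ℝ) j) ≠ (t' < (g : ℕ → ℝ) j)} (fun _ => 1) t

lemma sep_set_eq (a b : ℝ) :
    {t' : ℝ | (t' < a) ≠ (t' < b)} = Set.Ico (min a b) (max a b) := by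
  ext t
  simp only [Set.mem_setOf_eq, Set.mem_Ico]
  by_cases h1 : t < a <;> by_cases h2 : t < b <;>
    simp [h1, h2, min_le_iff, lt_max_iff, not_lt.1, le_of_lt]

lemma measD (f g : lp (fun _ : ℕ => ℝ) 1) (j : ℕ) : Measurable (D f g j) := by
  unfold D
  rw [sep_set_eq]
  exact measurable_const.indicator measurableSet_Ico

lemma summable_norm (f : lp (fun _ : ℕ => ℝ) 1) : Summable fun j => ‖(f : ℕ → ℝ) j‖ := by
  have := (lp.memℓp f).summable (by norm_num)
  simpa using this

/-- Coordinatewise layer-cake formula. -/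
lemma layer (a b : ℝ) (ha : 0 ≤ a) (hb : 0 ≤ b) :
    ∫⁻ t in Set.Ioi (0:ℝ),
      Set.indicator {t' : ℝ | (t' < a) ≠ (t' < b)} (fun _ => (1:ℝ≥0∞)) t
      = ENNReal.ofReal |a - b| := by
  rw [sep_set_eq, lintegral_indicator measurableSet_Ico, setLIntegral_one,
      Measure.restrict_apply measurableSet_Ico]
  have h1 : volume (Set.Ico (min a b) (max a b) ∩ Set.Ioi 0)
      = ENNReal.ofReal (max a b - min a b) := by
    apply le_antisymm
    · calc volume (Set.Ico (min a b) (max a b) ∩ Set.Ioi 0)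
          ≤ volume (Set.Ico (min a b) (max a b)) := measure_mono Set.inter_subset_left
        _ = ENNReal.ofReal (max a b - min a b) := Real.volume_Ico
    · calc ENNReal.ofReal (max a b - min a b)
          = volume (Set.Ioo (min a b) (max a b)) := Real.volume_Ioo.symm
        _ ≤ volume (Set.Ico (min a b) (max a b) ∩ Set.Ioi 0) := by
            apply measure_mono
            intro t ht
            exact ⟨⟨le_of_lt ht.1, ht.2⟩, lt_of_le_of_lt (le_min ha hb) ht.1⟩
  rw [h1, max_sub_min_eq_abs, abs_sub_comm]

/-- The counting function of the separating levels is the coerced cardinality. -/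
lemma tsum_D (f g : lp (fun _ : ℕ => ℝ) 1) (t : ℝ) :
    ∑' j, D f g j t
      = ({j : ℕ | (t < (f : ℕ → ℝ) j) ≠ (t < (g : ℕ → ℝ) j)}).encard := by
  have : ∀ j : ℕ, D f g j t
      = Set.indicator {j : ℕ | (t < (f : ℕ → ℝ) j) ≠ (t < (g : ℕ → ℝ) j)}
          (fun _ => (1:ℝ≥0∞)) j := by
    intro j
    unfold D
    by_cases h : (t < (f : ℕ → ℝ) j) ≠ (t < (g : ℕ → ℝ) j) <;>
      simp [Set.indicator_apply, h]
  rw [tsum_congr this, ← tsum_subtype, ENNReal.tsum_set_one]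

/-- For `f ∈ FragS` and `t > 0`, the level set is an initial segment of length its card. -/
lemma lev_eq_Iio {f : lp (fun _ : ℕ => ℝ) 1} (hf : f ∈ FragS) {t : ℝ} (ht : 0 < t) :
    {j : ℕ | t < (f : ℕ → ℝ) j} = Set.Iio ({j : ℕ | t < (f : ℕ → ℝ) j}.ncard) := by
  obtain ⟨hanti, hpos⟩ := hf
  have htend : Tendsto (fun j => ‖(f : ℕ → ℝ) j‖) atTop (𝓝 0) :=
    (summable_norm f).tendsto_atTop_zero
  have hev : ∀ᶠ j in atTop, ‖(f : ℕ → ℝ) j‖ < t := htend.eventually (gt_mem_nhds ht)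
  obtain ⟨k, hk⟩ := hev.exists
  have hne : {k : ℕ | (f : ℕ → ℝ) k ≤ t}.Nonempty :=
    ⟨k, le_of_lt (lt_of_le_of_lt (le_abs_self _) (by simpa [Real.norm_eq_abs] using hk))⟩
  set m := sInf {k : ℕ | (f : ℕ → ℝ) k ≤ t} with hm
  have hIio : {j : ℕ | t < (f : ℕ → ℝ) j} = Set.Iio m := by
    ext j
    simp only [Set.mem_setOf_eq, Set.mem_Iio]
    constructor
    · intro hj
      by_contra hle
      push_neg at hle
      have : (f : ℕ → ℝ) j ≤ (f : ℕ → ℝ) m := hanti hle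
      exact absurd (le_trans this (Nat.sInf_mem hne)) (not_le.2 hj)
    · intro hj
      have := Nat.notMem_of_lt_sInf (hm ▸ hj)
      simpa using this
  have hcard : (Set.Iio m).ncard = m := by
    rw [← Finset.coe_Iio, Set.ncard_coe_finset, Nat.card_Iio]
  rw [hIio, hcard]

lemma nat_tri {n : ℕ} (a b : Fin n → ℕ) :
    max (∑ i, a i) (∑ i, b i) - min (∑ i, a i) (∑ i, b i)
      ≤ ∑ i, (max (a i) (b i) - min (a i) (b i)) := by
  have h1 : ∀ p q : ℕ, ((max p q - min p q : ℕ) : ℤ) = |(p:ℤ) - q| := by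
    intro p q
    rcases le_total p q with h | h <;>
      [rw [max_eq_right h, min_eq_left h, Nat.cast_sub h, abs_sub_comm,
        abs_of_nonneg (sub_nonneg.2 (by exact_mod_cast h))];
       rw [max_eq_left h, min_eq_right h, Nat.cast_sub h,
        abs_of_nonneg (sub_nonneg.2 (by exact_mod_cast h))]]
  rw [← Nat.cast_le (α := ℤ)]
  push_cast
  rw [h1]
  calc |((∑ i, a i : ℕ) : ℤ) - ((∑ i, b i : ℕ) : ℤ)|
      = |∑ i, ((a i : ℤ) - (b i : ℤ))| := by push_cast; rw [Finset.sum_sub_distrib]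
    _ ≤ ∑ i, |(a i : ℤ) - (b i : ℤ)| := Finset.abs_sum_le_sum_abs _ _
    _ = ∑ i, ((max (a i) (b i) - min (a i) (b i) : ℕ) : ℤ) := by
        refine Finset.sum_congr rfl fun i _ => (h1 _ _).symm

/-- The `ℓ¹`-distance as an integral of the separating indicator counts. -/
lemma dist_formula {f g : lp (fun _ : ℕ => ℝ) 1} (hf : f ∈ FragS) (hg : g ∈ FragS) :
    ENNReal.ofReal ‖f - g‖ = ∫⁻ t in Set.Ioi (0:ℝ), ∑' j, D f g j t := by
  have hnorm : ‖f - g‖ = ∑' j, ‖(f : ℕ → ℝ) j - (g : ℕ → ℝ) j‖ := by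
    have h := lp.norm_eq_tsum_rpow (p := 1) (by norm_num) (f - g)
    simpa [lp.coeFn_sub, Pi.sub_apply] using h
  have hsummable : Summable fun j => ‖(f : ℕ → ℝ) j - (g : ℕ → ℝ) j‖ := by
    have := summable_norm (f - g)
    simpa [lp.coeFn_sub, Pi.sub_apply] using this
  rw [hnorm, ENNReal.ofReal_tsum_of_nonneg (fun j => norm_nonneg _) hsummable]
  have hcoord : ∀ j : ℕ, ENNReal.ofReal ‖(f : ℕ → ℝ) j - (g : ℕ → ℝ) j‖
      = ∫⁻ t in Set.Ioi (0:ℝ), D f g j t := by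
    intro j
    rw [Real.norm_eq_abs, ← layer _ _ (hf.2 j) (hg.2 j)]
    rfl
  rw [tsum_congr hcoord,
    ← lintegral_tsum (fun j => (measD f g j).aemeasurable)]

end StmtAux

open StmtAux

/-- The map from `𝒮ⁿ` (product topology) to `𝒮` sending an `n`-tuple of nonincreasing
summable nonnegative sequences to the decreasing rearrangement of the combined
collection `{s_j^{(i)} : 1 ≤ i ≤ n, j ≥ 1}` is continuous.  The map `merge` is
characterised by equimeasurability: for every level `t > 0`, the number of entries of
`merge x` above `t` equals the total number of entries of the `x i` above `t`. -/
theorem stmt1 (n : ℕ)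
    (merge : (Fin n → FragS) → FragS)
    (hmerge : ∀ (x : Fin n → FragS) (t : ℝ), 0 < t →
      {j | t < ((merge x : lp (fun _ : ℕ => ℝ) 1) : ℕ → ℝ) j}.ncard
        = ∑ i : Fin n, {j | t < ((x i : lp (fun _ : ℕ => ℝ) 1) : ℕ → ℝ) j}.ncard) :
    Continuous merge := by
  have key : ∀ x y : Fin n → FragS,
      edist (merge x) (merge y) ≤ ∑ i : Fin n, edist (x i) (y i) := by
    intro x y
    have hedist : ∀ f g : FragS, edist f g
        = ∫⁻ t in Set.Ioi (0:ℝ), ∑' j, D (f : lp (fun _ : ℕ => ℝ) 1) g j t := by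
      intro f g
      rw [Subtype.edist_eq, edist_dist, dist_eq_norm, dist_formula f.2 g.2]
    rw [hedist]
    have hRHS : ∀ i : Fin n, edist (x i) (y i)
        = ∫⁻ t in Set.Ioi (0:ℝ),
            ∑' j, D (x i : lp (fun _ : ℕ => ℝ) 1) (y i) j t := fun i => hedist _ _
    calc (∫⁻ t in Set.Ioi (0:ℝ), ∑' j, D (merge x : lp (fun _ : ℕ => ℝ) 1) (merge y) j t)
        ≤ ∫⁻ t in Set.Ioi (0:ℝ),
            ∑ i : Fin n, ∑' j, D (x i : lp (fun _ : ℕ => ℝ) 1) (y i) j t := by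
          refine lintegral_mono_ae ?_
          refine (ae_restrict_iff' measurableSet_Ioi).2 (ae_of_all _ fun t ht => ?_)
          have ht0 : (0:ℝ) < t := ht
          -- count-comparison at level t
          have hcount : ∀ (f g : FragS),
              ∑' j, D (f : lp (fun _ : ℕ => ℝ) 1) g j t
                = ((max ({j : ℕ | t < ((f : lp (fun _ : ℕ => ℝ) 1) : ℕ → ℝ) j}.ncard)
                      ({j : ℕ | t < ((g : lp (fun _ : ℕ => ℝ) 1) : ℕ → ℝ) j}.ncard)
                    - min ({j : ℕ | t < ((f : lp (fun _ : ℕ => ℝ) 1) : ℕ → ℝ) j}.ncard)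
                      ({j : ℕ | t < ((g : lp (fun _ : ℕ => ℝ) 1) : ℕ → ℝ) j}.ncard) : ℕ)
                    : ℝ≥0∞) := by
            intro f g
            rw [tsum_D]
            set a := {j : ℕ | t < ((f : lp (fun _ : ℕ => ℝ) 1) : ℕ → ℝ) j}.ncard
            set b := {j : ℕ | t < ((g : lp (fun _ : ℕ => ℝ) 1) : ℕ → ℝ) j}.ncard
            have hset : {j : ℕ | (t < ((f : lp (fun _ : ℕ => ℝ) 1) : ℕ → ℝ) j)
                  ≠ (t < ((g : lp (fun _ : ℕ => ℝ) 1) : ℕ → ℝ) j)}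
                = ↑(Finset.Ico (min a b) (max a b)) := by
              ext j
              have hfl := Set.ext_iff.1 (lev_eq_Iio f.2 ht0) j
              have hgl := Set.ext_iff.1 (lev_eq_Iio g.2 ht0) j
              simp only [Set.mem_setOf_eq, Set.mem_Iio] at hfl hgl
              simp only [Set.mem_setOf_eq, Finset.coe_Ico, Set.mem_Ico, hfl, hgl,
                ne_eq, eq_iff_iff]
              constructor
              · intro h; omega
              · intro h; omega
            rw [hset, Set.encard_coe_eq_coe_finsetCard, Nat.card_Ico]
            simp
          rw [hcount (merge x) (merge y)]
          refine le_trans ?_ (Finset.sum_le_sum fun i _ => le_of_eq (hcount (x i) (y i)).symm)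
          rw [hmerge x t ht0, hmerge y t ht0, ← Nat.cast_sum]
          exact Nat.cast_le.2 (nat_tri _ _)
        _ = ∑ i : Fin n, ∫⁻ t in Set.Ioi (0:ℝ),
              ∑' j, D (x i : lp (fun _ : ℕ => ℝ) 1) (y i) j t := by
            refine lintegral_finset_sum' _ fun i _ => ?_
            exact (Measurable.ennreal_tsum fun j => measD _ _ j).aemeasurable
        _ = ∑ i : Fin n, edist (x i) (y i) := by
            exact Finset.sum_congr rfl fun i _ => (hRHS i).symm
  have hlip : LipschitzWith n merge := by
    intro x y
    refine le_trans (key x y) ?_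
    calc ∑ i : Fin n, edist (x i) (y i)
        ≤ ∑ _i : Fin n, edist x y :=
          Finset.sum_le_sum fun i _ => edist_le_pi_edist x y i
      _ = n * edist x y := by simp [Finset.sum_const, nsmul_eq_mul]
      _ = (n : ℝ≥0) * edist x y := by norm_cast
  exact hlip.continuous
end

section
/- Let N(n) be a delayed renewal process on the nonnegative integers with delay τ₀ and i.i.d. inter-arrival times τ_{k+1} − τ_k (k ≥ 0), independent of τ₀, where N(n) = #{k ≥ 1 : τ_k ≤ n}. Suppose both τ₀ and τ₁ − τ₀ have exponential tails, i.e., E[r^{τ₀}] < ∞ and E[r^{τ₁−τ₀}] < ∞ for some r > 1. Then for any s ∈ (0,1), limsup_{n→∞} (1/n) log E[s^{N(n)}] < 0. -/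
open MeasureTheory ProbabilityTheory Filter Topology

/-- Exponential decay of `E[s^{N(n)}]` for a delayed renewal process whose delay `g 0`
and i.i.d. inter-arrival times `g (k+1)` (independent of the delay) have exponential
tails.  Here `τ k = g 0 + g 1 + ⋯ + g k` are the arrival times and
`N n = #{k ≥ 1 : τ k ≤ n}`. -/
theorem stmt3
    {Ω : Type*} [MeasurableSpace Ω] (μ : Measure Ω) [IsProbabilityMeasure μ]
    (g : ℕ → Ω → ℕ)
    (hmeas : ∀ k, Measurable (g k))
    (hindep : iIndepFun g μ)
    (hident : ∀ k, IdentDistrib (g (k + 1)) (g 1) μ μ)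
    (hpos : ∀ k ω, 1 ≤ g (k + 1) ω)
    (τ : ℕ → Ω → ℕ) (hτ : ∀ k ω, τ k ω = ∑ i ∈ Finset.range (k + 1), g i ω)
    (N : ℕ → Ω → ℕ) (hN : ∀ n ω, N n ω = {k | 1 ≤ k ∧ τ k ω ≤ n}.ncard)
    (htail : ∃ r : ℝ, 1 < r ∧ Integrable (fun ω => r ^ g 0 ω) μ ∧
      Integrable (fun ω => r ^ g 1 ω) μ) :
    ∀ s : ℝ, 0 < s → s < 1 →
      Filter.limsup (fun n : ℕ => (1 / (n : ℝ)) * Real.log (∫ ω, s ^ N n ω ∂μ))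
        atTop < 0 := by
  intro s hs0 hs1
  obtain ⟨r, hr, hint0, hint1⟩ := htail
  have hr0 : (0:ℝ) < r := lt_trans one_pos hr
  set t := Real.log r with ht_def
  have ht : 0 < t := Real.log_pos hr
  set X : ℕ → Ω → ℝ := fun i ω => (g i ω : ℝ) with hX
  have hXmeas : ∀ i, Measurable (X i) := fun i => measurable_from_top.comp (hmeas i)
  have hexp : ∀ i ω, Real.exp (t * X i ω) = r ^ g i ω := by
    intro i ω
    rw [hX]; dsimp only
    rw [mul_comm, Real.exp_nat_mul, Real.exp_log hr0]
  have hint : ∀ i, Integrable (fun ω => Real.exp (t * X i ω)) μ := by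
    intro i
    simp only [hexp]
    cases i with
    | zero => exact hint0
    | succ k =>
      exact (((hident k).comp
        (measurable_from_top : Measurable fun n : ℕ => (r:ℝ) ^ n)).integrable_iff).mpr hint1
  set A := mgf (X 0) μ t with hA_def
  set B := mgf (X 1) μ t with hB_def
  have hmgfB : ∀ k, mgf (X (k+1)) μ t = B := by
    intro k
    have h := ((hident k).comp
      (measurable_from_top : Measurable fun n : ℕ => (r:ℝ) ^ n)).integral_eq
    simp only [hB_def, mgf, hexp]
    exact h
  have hA1 : (1:ℝ) ≤ A := by
    have hb : ∀ ω, (1:ℝ) ≤ Real.exp (t * X 0 ω) := fun ω => by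
      rw [hexp]; exact one_le_pow₀ hr.le
    calc (1:ℝ) = ∫ _, (1:ℝ) ∂μ := by simp
    _ ≤ A := integral_mono (integrable_const 1) (hint 0) hb
  have hBr : r ≤ B := by
    have hb : ∀ ω, r ≤ Real.exp (t * X 1 ω) := fun ω => by
      rw [hexp]
      calc r = r ^ 1 := (pow_one r).symm
      _ ≤ r ^ g 1 ω := pow_le_pow_right₀ hr.le (hpos 0 ω)
    calc r = ∫ _, r ∂μ := by simp
    _ ≤ B := integral_mono (integrable_const r) (hint 1) hb
  have hB1 : (1:ℝ) < B := lt_of_lt_of_le hr hBr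
  have hlogB : 0 < Real.log B := Real.log_pos hB1
  have hB0 : (0:ℝ) < B := lt_trans one_pos hB1
  have hA0 : (0:ℝ) < A := lt_of_lt_of_le one_pos hA1
  have hindepX : iIndepFun X μ :=
    hindep.comp (fun _ => (Nat.cast : ℕ → ℝ)) (fun _ => measurable_from_top)
  have hYeq : ∀ m : ℕ, (fun ω => ((τ m ω : ℕ) : ℝ)) = ∑ i ∈ Finset.range (m+1), X i := by
    intro m; funext ω
    simp [hτ, hX, Finset.sum_apply]
  have hYint : ∀ m : ℕ, Integrable (fun ω => Real.exp (t * ((τ m ω : ℕ) : ℝ))) μ := by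
    intro m
    have h := hindepX.integrable_exp_mul_sum hXmeas
      (s := Finset.range (m+1)) (fun i _ => hint i)
    rw [← hYeq m] at h
    simpa using h
  have hmgfY : ∀ m : ℕ, mgf (fun ω => ((τ m ω : ℕ) : ℝ)) μ t = A * B ^ m := by
    intro m
    rw [hYeq m, hindepX.mgf_sum hXmeas, Finset.prod_range_succ']
    simp only [hmgfB]
    rw [Finset.prod_const, Finset.card_range, mul_comm]
  -- Chernoff bound
  have hcher : ∀ m n : ℕ, (μ {ω | n + 1 ≤ τ m ω}).toReal ≤
      Real.exp (-t * (n+1)) * (A * B ^ m) := by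
    intro m n
    have hset : {ω | n + 1 ≤ τ m ω} = {ω | ((n:ℝ) + 1) ≤ ((τ m ω : ℕ) : ℝ)} := by
      ext ω
      simp [Set.mem_setOf_eq]
      exact_mod_cast Iff.rfl
    rw [hset, ← hmgfY m]
    exact measure_ge_le_exp_mul_mgf ((n:ℝ)+1) ht.le (hYint m)
  -- basic facts about τ and N
  have hτmono : ∀ ω, Monotone fun k => τ k ω := by
    intro ω k l hkl
    simp only [hτ]
    exact Finset.sum_le_sum_of_subset (Finset.range_subset_range.mpr (by omega))
  have hτge : ∀ k ω, k ≤ τ k ω := by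
    intro k ω
    rw [hτ, Finset.sum_range_succ']
    have : k ≤ ∑ i ∈ Finset.range k, g (i+1) ω := by
      calc k = ∑ _i ∈ Finset.range k, 1 := by simp
      _ ≤ _ := Finset.sum_le_sum (fun i _ => hpos i ω)
    omega
  have hsub : ∀ n ω, {k | 1 ≤ k ∧ τ k ω ≤ n} ⊆ Set.Icc 1 n := by
    intro n ω k hk
    exact ⟨hk.1, le_trans (hτge k ω) hk.2⟩
  have hfin : ∀ n ω, {k | 1 ≤ k ∧ τ k ω ≤ n}.Finite := fun n ω =>
    (Set.finite_Icc 1 n).subset (hsub n ω)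
  have hIccncard : ∀ a b : ℕ, (Set.Icc a b).ncard = b + 1 - a := by
    intro a b
    rw [← Finset.coe_Icc, Set.ncard_coe_finset, Nat.card_Icc]
  have hNle : ∀ n ω, N n ω ≤ n := by
    intro n ω
    rw [hN]
    calc _ ≤ (Set.Icc 1 n).ncard := Set.ncard_le_ncard (hsub n ω) (Set.finite_Icc 1 n)
    _ = n := by rw [hIccncard]; omega
  have hNge : ∀ (m n : ℕ) ω, 1 ≤ m → τ m ω ≤ n → m ≤ N n ω := by
    intro m n ω hm hτm
    rw [hN]
    have hsub2 : Set.Icc 1 m ⊆ {k | 1 ≤ k ∧ τ k ω ≤ n} := by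
      intro k hk
      exact ⟨hk.1, le_trans (hτmono ω hk.2) hτm⟩
    calc m = (Set.Icc 1 m).ncard := by rw [hIccncard]; omega
    _ ≤ _ := Set.ncard_le_ncard hsub2 (hfin n ω)
  -- measurability of N
  have hτmeas : ∀ k, Measurable (τ k) := by
    intro k
    have heq : τ k = fun ω => ∑ i ∈ Finset.range (k+1), g i ω := by funext ω; exact hτ k ω
    rw [heq]
    exact Finset.measurable_sum _ (fun i _ => hmeas i)
  have hNmeas : ∀ n, Measurable (N n) := by
    intro n
    have heq : N n = fun ω => ∑ k ∈ Finset.Icc 1 n, if τ k ω ≤ n then 1 else 0 := by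
      funext ω
      rw [hN]
      have hset : {k | 1 ≤ k ∧ τ k ω ≤ n} =
          ↑((Finset.Icc 1 n).filter (fun k => τ k ω ≤ n)) := by
        ext k
        simp only [Finset.coe_filter, Finset.mem_Icc, Set.mem_setOf_eq]
        constructor
        · rintro ⟨h1, h2⟩; exact ⟨⟨h1, le_trans (hτge k ω) h2⟩, h2⟩
        · rintro ⟨⟨h1, _⟩, h2⟩; exact ⟨h1, h2⟩
      rw [hset, Set.ncard_coe_finset, Finset.card_filter]
    rw [heq]
    exact Finset.measurable_sum _ (fun k _ =>
      Measurable.ite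
        ((hτmeas k) (MeasurableSpace.measurableSet_top (s := {m : ℕ | m ≤ n}))
          : MeasurableSet {ω | τ k ω ≤ n})
        measurable_const measurable_const)
  have hsNmeas : ∀ n, Measurable (fun ω => s ^ N n ω) := fun n =>
    measurable_from_top.comp (hNmeas n)
  have hsNint : ∀ n, Integrable (fun ω => s ^ N n ω) μ := by
    intro n
    refine Integrable.mono' (integrable_const 1) (hsNmeas n).aestronglyMeasurable ?_
    filter_upwards with ω
    rw [Real.norm_eq_abs, abs_of_nonneg (pow_nonneg hs0.le _)]
    exact pow_le_one₀ hs0.le hs1.le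
  have hlow : ∀ n : ℕ, s ^ n ≤ ∫ ω, s ^ N n ω ∂μ := by
    intro n
    calc s ^ n = ∫ _, s ^ n ∂μ := by simp
    _ ≤ _ := integral_mono (integrable_const _) (hsNint n)
      (fun ω => pow_le_pow_of_le_one hs0.le hs1.le (hNle n ω))
  have hpos_int : ∀ n, 0 < ∫ ω, s ^ N n ω ∂μ := fun n =>
    lt_of_lt_of_le (pow_pos hs0 n) (hlow n)
  -- upper bound for the integral
  have hup : ∀ (m n : ℕ), 1 ≤ m → ∫ ω, s ^ N n ω ∂μ ≤
      s ^ m + Real.exp (-t * ((n:ℝ)+1)) * (A * B ^ m) := by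
    intro m n hm
    have hmeasset : MeasurableSet {ω | n + 1 ≤ τ m ω} :=
      ((hτmeas m) (MeasurableSpace.measurableSet_top (s := {j : ℕ | n + 1 ≤ j}))
        : MeasurableSet {ω | n + 1 ≤ τ m ω})
    have hptwise : ∀ ω, s ^ N n ω ≤
        s ^ m + {ω | n + 1 ≤ τ m ω}.indicator (fun _ => (1:ℝ)) ω := by
      intro ω
      by_cases h : τ m ω ≤ n
      · have h1 : m ≤ N n ω := hNge m n ω hm h
        have h2 : s ^ N n ω ≤ s ^ m := pow_le_pow_of_le_one hs0.le hs1.le h1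
        have h3 : (0:ℝ) ≤ {ω | n + 1 ≤ τ m ω}.indicator (fun _ => (1:ℝ)) ω :=
          Set.indicator_nonneg (fun _ _ => zero_le_one) ω
        linarith
      · have hω : ω ∈ {ω | n + 1 ≤ τ m ω} := by simp only [Set.mem_setOf_eq]; omega
        rw [Set.indicator_of_mem hω]
        have h2 : s ^ N n ω ≤ 1 := pow_le_one₀ hs0.le hs1.le
        have h3 : (0:ℝ) ≤ s ^ m := pow_nonneg hs0.le m
        linarith
    calc ∫ ω, s ^ N n ω ∂μ
        ≤ ∫ ω, (s ^ m + {ω | n + 1 ≤ τ m ω}.indicator (fun _ => (1:ℝ)) ω) ∂μ :=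
          integral_mono (hsNint n)
            ((integrable_const _).add ((integrable_const 1).indicator hmeasset)) hptwise
    _ = s ^ m + (μ {ω | n + 1 ≤ τ m ω}).toReal := by
          rw [integral_add (integrable_const _) ((integrable_const 1).indicator hmeasset)]
          rw [integral_indicator_const _ hmeasset]; simp [measureReal_def]
    _ ≤ s ^ m + Real.exp (-t * ((n:ℝ)+1)) * (A * B ^ m) := by
          linarith [hcher m n]
  clear_value A B
  -- choice of parameters
  set δ := t / (2 * Real.log B) with hδ_def
  have hδ : 0 < δ := div_pos ht (by linarith)
  have hlogs : Real.log s < 0 := Real.log_neg hs0 hs1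
  set c : ℝ := max (δ * Real.log s) (-(t/2)) with hc_def
  have hc : c < 0 := by
    apply max_lt
    · exact mul_neg_of_pos_of_neg hδ hlogs
    · linarith
  set C : ℝ := 1 + A * B with hC_def
  have hC1 : (1:ℝ) ≤ C := by nlinarith
  have hδlogB : δ * Real.log B = t / 2 := by
    rw [hδ_def]; field_simp
  -- key estimate
  have hkey : ∀ n : ℕ, ∫ ω, s ^ N n ω ∂μ ≤ C * Real.exp (c * n) := by
    intro n
    set m := max 1 ⌈δ * n⌉₊ with hm_def
    have hm1 : 1 ≤ m := le_max_left _ _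
    have hmge : δ * n ≤ (m:ℝ) := by
      refine le_trans (Nat.le_ceil _) ?_
      exact_mod_cast le_max_right 1 ⌈δ * (n:ℝ)⌉₊
    have hmle : (m:ℝ) ≤ δ * n + 1 := by
      have h1 : (⌈δ * (n:ℝ)⌉₊ : ℝ) < δ * n + 1 := Nat.ceil_lt_add_one (by positivity)
      have h2 : (m:ℝ) = max 1 (⌈δ * (n:ℝ)⌉₊:ℝ) := by
        rw [hm_def]; exact_mod_cast Nat.cast_max ..
      rw [h2]
      apply max_le
      · nlinarith [mul_nonneg hδ.le (Nat.cast_nonneg n : (0:ℝ) ≤ n)]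
      · linarith
    have term1 : s ^ m ≤ Real.exp ((δ * Real.log s) * n) := by
      have h1 : s ^ m = Real.exp (m * Real.log s) := by
        rw [← Real.log_pow, Real.exp_log (pow_pos hs0 m)]
      rw [h1]
      apply Real.exp_le_exp.mpr
      nlinarith
    have term2 : Real.exp (-t * ((n:ℝ)+1)) * (A * B ^ m) ≤ A * B * Real.exp (-(t/2) * n) := by
      have hBm : B ^ m = Real.exp (m * Real.log B) := by
        rw [← Real.log_pow, Real.exp_log (pow_pos hB0 m)]
      have h3 : (δ * (n:ℝ) + 1) * Real.log B = t/2 * n + Real.log B := by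
        rw [add_mul, one_mul, mul_comm δ (n:ℝ), mul_assoc, hδlogB]; ring
      have h2 : (m:ℝ) * Real.log B ≤ (δ * n + 1) * Real.log B :=
        mul_le_mul_of_nonneg_right hmle hlogB.le
      have hexpo : -t * ((n:ℝ)+1) + m * Real.log B ≤ Real.log B + (-(t/2) * n) := by
        nlinarith [mul_nonneg ht.le (Nat.cast_nonneg n : (0:ℝ) ≤ n)]
      calc Real.exp (-t * ((n:ℝ)+1)) * (A * B ^ m)
          = A * Real.exp (-t * ((n:ℝ)+1) + m * Real.log B) := by
            rw [hBm, Real.exp_add]; ring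
      _ ≤ A * Real.exp (Real.log B + (-(t/2) * n)) :=
            mul_le_mul_of_nonneg_left (Real.exp_le_exp.mpr hexpo) hA0.le
      _ = A * B * Real.exp (-(t/2) * n) := by
            rw [Real.exp_add, Real.exp_log hB0]; ring
    have e1 : Real.exp ((δ * Real.log s) * n) ≤ Real.exp (c * n) :=
      Real.exp_le_exp.mpr (mul_le_mul_of_nonneg_right (le_max_left _ _) (Nat.cast_nonneg n))
    have e2 : Real.exp (-(t/2) * n) ≤ Real.exp (c * n) :=
      Real.exp_le_exp.mpr (mul_le_mul_of_nonneg_right (le_max_right _ _) (Nat.cast_nonneg n))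
    have hAB : (0:ℝ) ≤ A * B := by positivity
    calc ∫ ω, s ^ N n ω ∂μ ≤ s ^ m + Real.exp (-t * ((n:ℝ)+1)) * (A * B ^ m) := hup m n hm1
    _ ≤ Real.exp (c * n) + A * B * Real.exp (c * n) := by
        have e2' := mul_le_mul_of_nonneg_left e2 hAB
        linarith
    _ = C * Real.exp (c * n) := by rw [hC_def]; ring
  -- conclusion
  have hev : ∀ᶠ n : ℕ in atTop,
      (1/(n:ℝ)) * Real.log (∫ ω, s ^ N n ω ∂μ) ≤ c/2 := by
    have htend : Tendsto (fun n : ℕ => Real.log C / n) atTop (nhds 0) :=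
      tendsto_const_div_atTop_nhds_zero_nat _
    have h1 : ∀ᶠ n : ℕ in atTop, Real.log C / n ≤ -c/2 :=
      htend.eventually_le_const (by linarith)
    filter_upwards [h1, eventually_ge_atTop 1] with n h1n hn1
    have hn0 : (0:ℝ) < n := by exact_mod_cast hn1
    have hlog : Real.log (∫ ω, s ^ N n ω ∂μ) ≤ Real.log C + c * n := by
      calc Real.log (∫ ω, s ^ N n ω ∂μ) ≤ Real.log (C * Real.exp (c * n)) :=
        Real.log_le_log (hpos_int n) (hkey n)
      _ = Real.log C + c * n := by
        rw [Real.log_mul (ne_of_gt (lt_of_lt_of_le one_pos hC1)) (Real.exp_ne_zero _),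
          Real.log_exp]
    calc (1/(n:ℝ)) * Real.log (∫ ω, s ^ N n ω ∂μ)
        ≤ (1/(n:ℝ)) * (Real.log C + c * n) :=
          mul_le_mul_of_nonneg_left hlog (le_of_lt (by positivity : (0:ℝ) < 1/(n:ℝ)))
    _ = Real.log C / n + c := by
        rw [mul_add]
        congr 1
        · rw [one_div, inv_mul_eq_div]
        · rw [one_div, inv_mul_eq_div, mul_comm]
          field_simp
    _ ≤ -c/2 + c := by linarith
    _ = c/2 := by ring
  have hlb : ∀ᶠ n : ℕ in atTop,
      Real.log s ≤ (1/(n:ℝ)) * Real.log (∫ ω, s ^ N n ω ∂μ) := by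
    filter_upwards [eventually_ge_atTop 1] with n hn1
    have hn0 : (0:ℝ) < n := by exact_mod_cast hn1
    have h1 : Real.log (s ^ n) ≤ Real.log (∫ ω, s ^ N n ω ∂μ) :=
      Real.log_le_log (pow_pos hs0 n) (hlow n)
    rw [Real.log_pow] at h1
    have h2 : (1/(n:ℝ)) * ((n:ℝ) * Real.log s) ≤
        (1/(n:ℝ)) * Real.log (∫ ω, s ^ N n ω ∂μ) :=
      mul_le_mul_of_nonneg_left h1 (le_of_lt (by positivity : (0:ℝ) < 1/(n:ℝ)))
    have h3 : (1/(n:ℝ)) * ((n:ℝ) * Real.log s) = Real.log s := by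
      field_simp
    linarith
  have hcob : IsCoboundedUnder (· ≤ ·) atTop
      (fun n : ℕ => (1/(n:ℝ)) * Real.log (∫ ω, s ^ N n ω ∂μ)) :=
    isCoboundedUnder_le_of_eventually_le atTop hlb
  calc Filter.limsup (fun n : ℕ => (1/(n:ℝ)) * Real.log (∫ ω, s ^ N n ω ∂μ)) atTop
      ≤ c/2 := limsup_le_of_le hcob hev
  _ < 0 := by linarith
end

section
/- Consider a delayed renewal process with arrival times τ₀ < τ₁ < ⋯, where τ₀ and the i.i.d. inter-arrival times have exponential tails. Suppose each inter-arrival interval is independently marked, with indicator I_k depending only on the interval length τ_k − τ_{k−1}, and q := P(I₁ = 1) > 0. Then the counting process M(n) = #{k ≥ 1 : τ_k ≤ n, I_k = 1} of marked renewals is itself a delayed renewal process whose delay and inter-arrival distributions have exponential tails; consequently, for any s ∈ (0,1), limsup_{n→∞} (1/n) log E[s^{M(n)}] < 0. -/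
open MeasureTheory ProbabilityTheory Filter Topology
lemma aux_lintegral_prod {Ω : Type*} [MeasurableSpace Ω] {μ : Measure Ω} [IsProbabilityMeasure μ]
    {ι : Type*} {Z : ι → Ω → ENNReal} (h : iIndepFun Z μ)
    (hm : ∀ i, Measurable (Z i)) (T : Finset ι) :
    ∫⁻ ω, ∏ k ∈ T, Z k ω ∂μ = ∏ k ∈ T, ∫⁻ ω, Z k ω ∂μ := by
  classical
  induction T using Finset.induction_on with
  | empty => simp
  | @insert i T hi ih =>
    rw [Finset.prod_insert hi]
    have hindep : IndepFun (∏ j ∈ T, Z j) (Z i) μ :=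
      h.indepFun_finsetProd_of_notMem hm hi
    have hprod : Measurable (∏ j ∈ T, Z j) := by
      rw [show (∏ j ∈ T, Z j) = fun a => ∏ j ∈ T, Z j a from funext fun a => Finset.prod_apply ..]
      exact Finset.measurable_prod _ fun j _ => hm j
    have key := lintegral_mul_eq_lintegral_mul_lintegral_of_indepFun (hm i) hprod hindep.symm
    simp_rw [Finset.prod_insert hi]
    calc ∫⁻ ω, Z i ω * ∏ k ∈ T, Z k ω ∂μ
        = (∫⁻ ω, Z i ω ∂μ) * ∫⁻ ω, (∏ j ∈ T, Z j) ω ∂μ := by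
          rw [← key]; apply lintegral_congr; intro ω; simp [Finset.prod_apply]
      _ = (∫⁻ ω, Z i ω ∂μ) * ∏ k ∈ T, ∫⁻ ω, Z k ω ∂μ := by
          rw [← ih]; congr 1; apply lintegral_congr; intro ω; simp [Finset.prod_apply]

lemma aux_arith {u A B r : ℝ} (hu0 : 0 < u) (hu1 : u < 1) (hA : 0 < A) (hB : 1 ≤ B)
    (hr : 1 < r) :
    ∃ C θ : ℝ, 0 < C ∧ 0 < θ ∧ θ < 1 ∧ ∀ n : ℕ, ∃ K : ℕ,
      u ^ K + A * B ^ K * r⁻¹ ^ n ≤ C * θ ^ n := by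
  obtain ⟨d₀, hd₀⟩ := pow_unbounded_of_one_lt B hr
  have hd1 : 1 ≤ d₀ + 1 := Nat.le_add_left 1 d₀
  set d := d₀ + 1 with hd
  have hBd : B ≤ r ^ d := le_trans hd₀.le (pow_le_pow_right₀ hr.le (Nat.le_succ _))
  have h2d : (0:ℝ) < 2 * d := by positivity
  have hr0 : (0:ℝ) < r := lt_trans one_pos hr
  have hrinv0 : (0:ℝ) < r⁻¹ := by positivity
  have hrinv1 : r⁻¹ < 1 := inv_lt_one_of_one_lt₀ hr
  have hθ₁0 : 0 < u ^ ((2 * (d:ℝ))⁻¹) := Real.rpow_pos_of_pos hu0 _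
  have hθ₁1 : u ^ ((2 * (d:ℝ))⁻¹) < 1 := Real.rpow_lt_one hu0.le hu1 (by positivity)
  have hθ₂0 : 0 < Real.sqrt r⁻¹ := Real.sqrt_pos.mpr hrinv0
  have hθ₂1 : Real.sqrt r⁻¹ < 1 := by
    rw [show (1:ℝ) = Real.sqrt 1 from (Real.sqrt_one).symm]
    exact Real.sqrt_lt_sqrt hrinv0.le hrinv1
  refine ⟨u⁻¹ + A, max (u ^ ((2 * (d:ℝ))⁻¹)) (Real.sqrt r⁻¹), by positivity,
    lt_max_of_lt_left hθ₁0, max_lt hθ₁1 hθ₂1, fun n => ⟨n / (2 * d), ?_⟩⟩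
  set K := n / (2 * d) with hK
  have hterm1 : u ^ K ≤ u⁻¹ * (u ^ ((2 * (d:ℝ))⁻¹)) ^ n := by
    have h2' : n < (K + 1) * (2 * d) := by
      have h := Nat.div_add_mod n (2 * d)
      have hm := Nat.mod_lt n (show 0 < 2 * d by positivity)
      calc n = 2 * d * K + n % (2 * d) := by rw [hK]; omega
      _ < 2 * d * K + 2 * d := by omega
      _ = (K + 1) * (2 * d) := by ring
    have h2 : (n:ℝ) < (K + 1) * (2 * d) := by exact_mod_cast h2'
    have h1 : ((n:ℝ) / (2 * d)) - 1 ≤ (K:ℝ) := by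
      rw [sub_le_iff_le_add, div_le_iff₀ h2d]
      nlinarith
    calc u ^ K = u ^ ((K:ℝ)) := by rw [Real.rpow_natCast]
    _ ≤ u ^ ((n:ℝ) / (2 * d) - 1) := Real.rpow_le_rpow_of_exponent_ge hu0 hu1.le h1
    _ = u⁻¹ * (u ^ ((2 * (d:ℝ))⁻¹)) ^ n := by
        rw [Real.rpow_sub hu0, Real.rpow_one, ← Real.rpow_natCast (u ^ ((2 * (d:ℝ))⁻¹)) n,
          ← Real.rpow_mul hu0.le,
          show (n:ℝ) / (2 * (d:ℝ)) = (2 * (d:ℝ))⁻¹ * (n:ℝ) by ring]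
        ring
  have hterm2 : A * B ^ K * r⁻¹ ^ n ≤ A * (Real.sqrt r⁻¹) ^ n := by
    have hdK : 2 * (d * K) ≤ n := by
      calc 2 * (d * K) = (2 * d) * (n / (2 * d)) := by rw [hK]; ring
      _ ≤ n := Nat.mul_div_le n (2 * d)
    have hdKr : (d:ℝ) * (K:ℝ) ≤ (n:ℝ) / 2 := by
      have h3 : (2:ℝ) * ((d:ℝ) * (K:ℝ)) ≤ (n:ℝ) := by exact_mod_cast hdK
      linarith
    have key : B ^ K * r⁻¹ ^ n ≤ (Real.sqrt r⁻¹) ^ n := by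
      calc B ^ K * r⁻¹ ^ n ≤ (r ^ d) ^ K * r⁻¹ ^ n :=
            mul_le_mul_of_nonneg_right
              (pow_le_pow_left₀ (le_trans zero_le_one hB) hBd K) (by positivity)
      _ = r ^ (((d * K : ℕ)) : ℝ) * r ^ (-(n:ℝ)) := by
            rw [← pow_mul, Real.rpow_natCast, Real.rpow_neg hr0.le, inv_pow,
              Real.rpow_natCast]
      _ = r ^ ((d:ℝ) * (K:ℝ) - (n:ℝ)) := by
            rw [← Real.rpow_add hr0]; congr 1; push_cast; ring
      _ ≤ r ^ (-(n:ℝ) / 2) := by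
            apply Real.rpow_le_rpow_of_exponent_le hr.le
            linarith
      _ = (Real.sqrt r⁻¹) ^ n := by
            rw [Real.sqrt_eq_rpow, ← Real.rpow_natCast ((r⁻¹) ^ ((1:ℝ)/2)) n,
              ← Real.rpow_mul hrinv0.le, Real.inv_rpow hr0.le, ← Real.rpow_neg hr0.le]
            congr 1
            ring
    calc A * B ^ K * r⁻¹ ^ n = A * (B ^ K * r⁻¹ ^ n) := by ring
    _ ≤ A * (Real.sqrt r⁻¹) ^ n := by
        apply mul_le_mul_of_nonneg_left key hA.le
  calc u ^ K + A * B ^ K * r⁻¹ ^ n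
      ≤ u⁻¹ * (u ^ ((2 * (d:ℝ))⁻¹)) ^ n + A * (Real.sqrt r⁻¹) ^ n := add_le_add hterm1 hterm2
    _ ≤ u⁻¹ * (max (u ^ ((2 * (d:ℝ))⁻¹)) (Real.sqrt r⁻¹)) ^ n
        + A * (max (u ^ ((2 * (d:ℝ))⁻¹)) (Real.sqrt r⁻¹)) ^ n :=
        add_le_add
          (mul_le_mul_of_nonneg_left
            (pow_le_pow_left₀ hθ₁0.le (le_max_left _ _) n) (inv_nonneg.mpr hu0.le))
          (mul_le_mul_of_nonneg_left
            (pow_le_pow_left₀ hθ₂0.le (le_max_right _ _) n) hA.le)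
    _ = (u⁻¹ + A) * (max (u ^ ((2 * (d:ℝ))⁻¹)) (Real.sqrt r⁻¹)) ^ n := by ring

/-- Marked renewal process.  The delay `g 0` and the i.i.d. marked inter-arrival pairs
`(g k, I k)`, `k ≥ 1`, are mutually independent, increments are positive with
exponential tails, and each interval is marked with probability `q > 0` (the mark `I k`
depending only on the `k`-th interval).  Then the counting process
`M n = #{k ≥ 1 : τ k ≤ n, I k = true}` of marked renewals is a delayed renewal process
whose delay `ρ 0` and first inter-arrival time `ρ 1 − ρ 0` have exponential tails, and
consequently `limsup (1/n) log E[s^{M(n)}] < 0` for every `s ∈ (0,1)`. -/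
theorem stmt4
    {Ω : Type*} [MeasurableSpace Ω] (μ : Measure Ω) [IsProbabilityMeasure μ]
    (g : ℕ → Ω → ℕ) (I : ℕ → Ω → Bool)
    (hmeas : ∀ k, Measurable (g k)) (hmeasI : ∀ k, Measurable (I k))
    (hindep : iIndepFun
      (fun k ω => if k = 0 then (g 0 ω, false) else (g k ω, I k ω)) μ)
    (hident : ∀ k, IdentDistrib (fun ω => (g (k + 1) ω, I (k + 1) ω))
      (fun ω => (g 1 ω, I 1 ω)) μ μ)
    (hpos : ∀ k ω, 1 ≤ g (k + 1) ω)
    (q : ℝ) (hq : 0 < q) (hqI : μ {ω | I 1 ω = true} = ENNReal.ofReal q)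
    (τ : ℕ → Ω → ℕ) (hτ : ∀ k ω, τ k ω = ∑ i ∈ Finset.range (k + 1), g i ω)
    (M : ℕ → Ω → ℕ)
    (hM : ∀ n ω, M n ω = {k | 1 ≤ k ∧ τ k ω ≤ n ∧ I k ω = true}.ncard)
    (ρ : ℕ → Ω → ℕ) (hρ : ∀ j ω, ρ j ω = sInf {n : ℕ | j + 1 ≤ M n ω})
    (htail : ∃ r : ℝ, 1 < r ∧ Integrable (fun ω => r ^ g 0 ω) μ ∧
      Integrable (fun ω => r ^ g 1 ω) μ) :
    (∃ r : ℝ, 1 < r ∧ Integrable (fun ω => r ^ ρ 0 ω) μ ∧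
      Integrable (fun ω => r ^ (ρ 1 ω - ρ 0 ω)) μ) ∧
    ∀ s : ℝ, 0 < s → s < 1 →
      Filter.limsup (fun n : ℕ => (1 / (n : ℝ)) * Real.log (∫ ω, s ^ M n ω ∂μ))
        atTop < 0 := by
  classical
  obtain ⟨r, hr, hg0int, hg1int⟩ := htail
  set Y : ℕ → Ω → ℕ × Bool := fun k ω => if k = 0 then (g 0 ω, false) else (g k ω, I k ω)
    with hY
  -- basic facts
  have hq1 : q ≤ 1 := by
    have h := prob_le_one (μ := μ) (s := {ω | I 1 ω = true})
    rw [hqI] at h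
    exact (ENNReal.ofReal_le_one).mp h
  have hmeasτ : ∀ k, Measurable (τ k) := by
    intro k
    have : τ k = fun ω => ∑ i ∈ Finset.range (k + 1), g i ω := funext fun ω => hτ k ω
    rw [this]
    exact Finset.measurable_sum _ fun i _ => hmeas i
  have hτ_ge : ∀ k ω, k ≤ τ k ω := by
    intro k
    induction k with
    | zero => intro ω; exact Nat.zero_le _
    | succ k ih =>
      intro ω
      have h1 : τ (k+1) ω = τ k ω + g (k+1) ω := by
        rw [hτ, hτ, Finset.sum_range_succ]
      rw [h1]
      have := hpos k ω
      have := ih ω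
      omega
  have hτ_mono : ∀ k K ω, k ≤ K → τ k ω ≤ τ K ω := by
    intro k K ω hkK
    rw [hτ, hτ]
    exact Finset.sum_le_sum_of_subset (Finset.range_subset_range.mpr (by omega))
  have hMset : ∀ n ω, {k | 1 ≤ k ∧ τ k ω ≤ n ∧ I k ω = true}
      = ↑((Finset.Icc 1 n).filter fun k => τ k ω ≤ n ∧ I k ω = true) := by
    intro n ω
    ext k
    simp only [Finset.coe_filter, Finset.mem_Icc, Set.mem_setOf_eq]
    constructor
    · rintro ⟨h1, h2, h3⟩
      exact ⟨⟨h1, le_trans (hτ_ge k ω) h2⟩, h2, h3⟩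
    · rintro ⟨⟨h1, _⟩, h2, h3⟩
      exact ⟨h1, h2, h3⟩
  have hMcard : ∀ n ω, M n ω
      = ((Finset.Icc 1 n).filter fun k => τ k ω ≤ n ∧ I k ω = true).card := by
    intro n ω
    rw [hM, hMset, Set.ncard_coe_finset]
  have hmeasM : ∀ n, Measurable (M n) := by
    intro n
    have : M n = fun ω => ∑ k ∈ Finset.Icc 1 n,
        if τ k ω ≤ n ∧ I k ω = true then 1 else 0 := by
      funext ω
      rw [hMcard, Finset.card_filter]
    rw [this]
    apply Finset.measurable_sum
    intro k _
    apply Measurable.ite _ measurable_const measurable_const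
    exact MeasurableSet.inter (hmeasτ k measurableSet_Iic)
      ((hmeasI k) (measurableSet_singleton true))
  have hMn_le : ∀ n ω, M n ω ≤ n := by
    intro n ω
    rw [hMcard]
    calc ((Finset.Icc 1 n).filter fun k => τ k ω ≤ n ∧ I k ω = true).card
        ≤ (Finset.Icc 1 n).card := Finset.card_filter_le _ _
      _ = n := by rw [Nat.card_Icc]; omega
  have hSm : ∀ j m : ℕ, MeasurableSet {ω | j + 1 ≤ M m ω} :=
    fun j m => hmeasM m measurableSet_Ici
  have hmeasρ : ∀ j, Measurable (ρ j) := by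
    intro j
    apply measurable_to_countable'
    intro v
    match v with
    | 0 =>
      have hset : ρ j ⁻¹' {0} = {ω | j + 1 ≤ M 0 ω} ∪ ⋂ m, {ω | j + 1 ≤ M m ω}ᶜ := by
        ext ω
        simp only [Set.mem_preimage, Set.mem_singleton_iff, Set.mem_union, Set.mem_iInter,
          Set.mem_compl_iff, Set.mem_setOf_eq]
        rw [hρ, Nat.sInf_eq_zero]
        constructor
        · rintro (h | h)
          · exact Or.inl h
          · exact Or.inr fun m hm => by
              rw [Set.eq_empty_iff_forall_notMem] at h
              exact h m hm
        · rintro (h | h)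
          · exact Or.inl h
          · exact Or.inr (Set.eq_empty_iff_forall_notMem.mpr h)
      rw [hset]
      exact (hSm j 0).union (MeasurableSet.iInter fun m => (hSm j m).compl)
    | v + 1 =>
      have hset : ρ j ⁻¹' {v + 1} = {ω | j + 1 ≤ M (v+1) ω}
          ∩ ⋂ m, ⋂ _ : m ≤ v, {ω | j + 1 ≤ M m ω}ᶜ := by
        ext ω
        simp only [Set.mem_preimage, Set.mem_singleton_iff, Set.mem_inter_iff, Set.mem_iInter,
          Set.mem_compl_iff, Set.mem_setOf_eq]
        rw [hρ]
        constructor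
        · intro h
          have hne : {n : ℕ | j + 1 ≤ M n ω}.Nonempty := by
            by_contra hc
            rw [Set.not_nonempty_iff_eq_empty] at hc
            rw [hc, Nat.sInf_empty] at h
            exact Nat.succ_ne_zero v h.symm
          have hmem := Nat.sInf_mem hne
          rw [h] at hmem
          refine ⟨hmem, fun m hm => ?_⟩
          have : m < sInf {n : ℕ | j + 1 ≤ M n ω} := by omega
          exact fun hmem' => Nat.notMem_of_lt_sInf this hmem'
        · rintro ⟨h1, h2⟩
          refine le_antisymm (Nat.sInf_le h1) ?_
          by_contra hc
          push_neg at hc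
          have hne : {n : ℕ | j + 1 ≤ M n ω}.Nonempty := ⟨v + 1, h1⟩
          have hmem := Nat.sInf_mem hne
          have hlt : sInf {n : ℕ | j + 1 ≤ M n ω} ≤ v := by omega
          exact h2 _ hlt hmem
      rw [hset]
      exact (hSm j (v+1)).inter
        (MeasurableSet.iInter fun m => MeasurableSet.iInter fun _ => (hSm j m).compl)
  -- A and B
  set A := ∫ ω, (r:ℝ) ^ g 0 ω ∂μ with hangA
  set B := ∫ ω, (r:ℝ) ^ g 1 ω ∂μ with hangB
  have hA1 : 1 ≤ A := by
    rw [hangA]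
    calc (1:ℝ) = ∫ _ω, (1:ℝ) ∂μ := by simp
    _ ≤ ∫ ω, r ^ g 0 ω ∂μ :=
        integral_mono (integrable_const 1) hg0int fun ω => one_le_pow₀ hr.le
  have hB1 : 1 ≤ B := by
    rw [hangB]
    calc (1:ℝ) = ∫ _ω, (1:ℝ) ∂μ := by simp
    _ ≤ ∫ ω, r ^ g 1 ω ∂μ :=
        integral_mono (integrable_const 1) hg1int fun ω => one_le_pow₀ hr.le
  have hYmeas : ∀ k, Measurable (Y k) := by
    intro k
    match k with
    | 0 =>
      have : Y 0 = fun ω => (g 0 ω, false) := by funext ω; simp [hY]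
      rw [this]
      exact (hmeas 0).prodMk measurable_const
    | k + 1 =>
      have : Y (k+1) = fun ω => (g (k+1) ω, I (k+1) ω) := by funext ω; simp [hY]
      rw [this]
      exact (hmeas (k+1)).prodMk (hmeasI (k+1))
  have hYfst : ∀ k ω, (Y k ω).1 = g k ω := by
    intro k ω
    by_cases hk : k = 0
    · subst hk; simp [hY]
    · simp [hY, hk]
  -- tail family
  set Zr : ℕ → Ω → ENNReal := fun i ω => ENNReal.ofReal (r ^ (Y i ω).1) with hZr
  have hZrmeas : ∀ i, Measurable (Zr i) :=
    fun i => (measurable_of_countable (fun p : ℕ × Bool => ENNReal.ofReal (r ^ p.1))).comp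
      (hYmeas i)
  have hindepZr : iIndepFun Zr μ :=
    hindep.comp (fun _ => fun p : ℕ × Bool => ENNReal.ofReal (r ^ p.1))
      (fun _ => measurable_of_countable _)
  have hZr0 : ∫⁻ ω, Zr 0 ω ∂μ = ENNReal.ofReal A := by
    have h1 : ∀ ω, Zr 0 ω = ENNReal.ofReal (r ^ g 0 ω) := fun ω => by
      show ENNReal.ofReal (r ^ (Y 0 ω).1) = _
      rw [hYfst]
    simp_rw [h1]
    rw [← ofReal_integral_eq_lintegral_ofReal hg0int
      (ae_of_all _ fun ω => by positivity)]
  have hZrk : ∀ k, ∫⁻ ω, Zr (k+1) ω ∂μ = ENNReal.ofReal B := by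
    intro k
    have h1 : ∀ ω, Zr (k+1) ω = ENNReal.ofReal (r ^ g (k+1) ω) := fun ω => by
      show ENNReal.ofReal (r ^ (Y (k+1) ω).1) = _
      rw [hYfst]
    simp_rw [h1]
    have hid : IdentDistrib (fun ω => ENNReal.ofReal (r ^ g (k+1) ω))
        (fun ω => ENNReal.ofReal (r ^ g 1 ω)) μ μ :=
      (hident k).comp (measurable_of_countable (fun p : ℕ × Bool => ENNReal.ofReal (r ^ p.1)))
    rw [hid.lintegral_eq]
    rw [← ofReal_integral_eq_lintegral_ofReal hg1int
      (ae_of_all _ fun ω => by positivity)]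
  have hτprod : ∀ K : ℕ, ∫⁻ ω, ENNReal.ofReal (r ^ τ K ω) ∂μ
      = ENNReal.ofReal A * ENNReal.ofReal B ^ K := by
    intro K
    have h1 : ∀ ω, ENNReal.ofReal (r ^ τ K ω) = ∏ i ∈ Finset.range (K+1), Zr i ω := by
      intro ω
      rw [hτ, ← Finset.prod_pow_eq_pow_sum, ENNReal.ofReal_prod_of_nonneg
        (fun i _ => by positivity)]
      refine Finset.prod_congr rfl fun i _ => ?_
      show ENNReal.ofReal (r ^ g i ω) = ENNReal.ofReal (r ^ (Y i ω).1)
      rw [hYfst]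
    simp_rw [h1]
    rw [aux_lintegral_prod hindepZr hZrmeas, Finset.prod_range_succ']
    simp_rw [hZrk, hZr0, Finset.prod_const, Finset.card_range]
    ring
  have hμτ : ∀ n K : ℕ, μ {ω | n < τ K ω} ≤ ENNReal.ofReal (A * B ^ K * r⁻¹ ^ n) := by
    intro n K
    have hsub : {ω | n < τ K ω}
        ⊆ {ω | ENNReal.ofReal (r ^ n) ≤ ENNReal.ofReal (r ^ τ K ω)} := by
      intro ω hω
      exact ENNReal.ofReal_le_ofReal (pow_le_pow_right₀ hr.le (le_of_lt hω))
    have hmark := mul_meas_ge_le_lintegral₀ (μ := μ)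
      (f := fun ω => ENNReal.ofReal (r ^ τ K ω))
      (((measurable_of_countable (fun m : ℕ => ENNReal.ofReal (r ^ m))).comp
        (hmeasτ K)).aemeasurable) (ENNReal.ofReal (r ^ n))
    rw [hτprod K] at hmark
    have hrn0 : ENNReal.ofReal (r ^ n) ≠ 0 := by
      simp only [ne_eq, ENNReal.ofReal_eq_zero, not_le]
      positivity
    have h2 : μ {ω | ENNReal.ofReal (r ^ n) ≤ ENNReal.ofReal (r ^ τ K ω)}
        ≤ ENNReal.ofReal A * ENNReal.ofReal B ^ K / ENNReal.ofReal (r ^ n) := by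
      rw [ENNReal.le_div_iff_mul_le (Or.inl hrn0) (Or.inl ENNReal.ofReal_ne_top)]
      rw [mul_comm]
      exact hmark
    calc μ {ω | n < τ K ω}
        ≤ μ {ω | ENNReal.ofReal (r ^ n) ≤ ENNReal.ofReal (r ^ τ K ω)} := measure_mono hsub
      _ ≤ ENNReal.ofReal A * ENNReal.ofReal B ^ K / ENNReal.ofReal (r ^ n) := h2
      _ = ENNReal.ofReal (A * B ^ K * r⁻¹ ^ n) := by
          rw [← ENNReal.ofReal_pow (by linarith : (0:ℝ) ≤ B),
            ← ENNReal.ofReal_mul (by linarith : (0:ℝ) ≤ A),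
            ← ENNReal.ofReal_div_of_pos (by positivity : (0:ℝ) < r ^ n)]
          congr 1
          rw [inv_pow]
          ring
  -- mark indicator second coordinate
  have hYsnd : ∀ k ω, (Y (k+1) ω).2 = I (k+1) ω := by
    intro k ω
    simp [hY]
  have key : ∀ s : ℝ, 0 < s → s < 1 → ∀ n K : ℕ,
      ∫ ω, s ^ M n ω ∂μ ≤ (1 - q + q * s) ^ K + A * B ^ K * r⁻¹ ^ n := by
    intro s hs0 hs1 n K
    have hu0 : 0 < 1 - q + q * s := by nlinarith
    have hu1 : 1 - q + q * s < 1 := by nlinarith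
    set Zs : ℕ → Ω → ENNReal :=
      fun k ω => ENNReal.ofReal (if (Y k ω).2 = true then s else 1) with hZs
    have hZsmeas : ∀ i, Measurable (Zs i) :=
      fun i => (measurable_of_countable
        (fun p : ℕ × Bool => ENNReal.ofReal (if p.2 = true then s else 1))).comp (hYmeas i)
    have hindepZs : iIndepFun Zs μ :=
      hindep.comp (fun _ => fun p : ℕ × Bool => ENNReal.ofReal (if p.2 = true then s else 1))
        (fun _ => measurable_of_countable _)
    have hZs1 : ∀ k : ℕ, ∫⁻ ω, Zs (k+1) ω ∂μ = ENNReal.ofReal (1 - q + q * s) := by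
      intro k
      have h1 : ∀ ω, Zs (k+1) ω = ENNReal.ofReal (if I (k+1) ω = true then s else 1) := by
        intro ω
        show ENNReal.ofReal (if (Y (k+1) ω).2 = true then s else 1) = _
        rw [hYsnd]
      simp_rw [h1]
      have hid : IdentDistrib (fun ω => ENNReal.ofReal (if I (k+1) ω = true then s else 1))
          (fun ω => ENNReal.ofReal (if I 1 ω = true then s else 1)) μ μ :=
        (hident k).comp (measurable_of_countable
          (fun p : ℕ × Bool => ENNReal.ofReal (if p.2 = true then s else 1)))
      rw [hid.lintegral_eq]
      -- compute the integral over the event {I 1 = true} and its complement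
      have hE : MeasurableSet {ω | I 1 ω = true} := (hmeasI 1) (measurableSet_singleton true)
      rw [← lintegral_add_compl _ hE]
      have hIn : ∫⁻ ω in {ω | I 1 ω = true},
          ENNReal.ofReal (if I 1 ω = true then s else 1) ∂μ = ENNReal.ofReal s * μ {ω | I 1 ω = true} := by
        rw [setLIntegral_congr_fun hE
          (fun ω hω => by simp only [Set.mem_setOf_eq] at hω; rw [if_pos hω])]
        rw [setLIntegral_const]
      have hOut : ∫⁻ ω in {ω | I 1 ω = true}ᶜ,
          ENNReal.ofReal (if I 1 ω = true then s else 1) ∂μ = μ {ω | I 1 ω = true}ᶜ := by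
        rw [setLIntegral_congr_fun hE.compl
          (fun ω hω => by
            simp only [Set.mem_compl_iff, Set.mem_setOf_eq] at hω
            rw [if_neg hω, ENNReal.ofReal_one])]
        rw [setLIntegral_const, one_mul]
      rw [hIn, hOut, hqI, prob_compl_eq_one_sub hE, hqI]
      rw [← ENNReal.ofReal_one, ← ENNReal.ofReal_sub _ hq.le, ← ENNReal.ofReal_mul hs0.le,
        ← ENNReal.ofReal_add (by positivity) (by linarith)]
      congr 1
      ring
    have hprodZs : ∫⁻ ω, ∏ k ∈ Finset.Icc 1 K, Zs k ω ∂μ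
        = ENNReal.ofReal (1 - q + q * s) ^ K := by
      rw [aux_lintegral_prod hindepZs hZsmeas]
      have : ∀ k ∈ Finset.Icc 1 K, ∫⁻ ω, Zs k ω ∂μ = ENNReal.ofReal (1 - q + q * s) := by
        intro k hk
        rw [Finset.mem_Icc] at hk
        obtain ⟨j, rfl⟩ : ∃ j, k = j + 1 := ⟨k - 1, by omega⟩
        exact hZs1 j
      rw [Finset.prod_congr rfl this, Finset.prod_const, Nat.card_Icc]
      norm_num
    have hpointwise : ∀ ω, ENNReal.ofReal (s ^ M n ω)
        ≤ (∏ k ∈ Finset.Icc 1 K, Zs k ω) + Set.indicator {ω | n < τ K ω} 1 ω := by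
      intro ω
      have hprod_eq : ∏ k ∈ Finset.Icc 1 K, Zs k ω
          = ENNReal.ofReal (s ^ ((Finset.Icc 1 K).filter fun k => I k ω = true).card) := by
        have h1 : ∀ k ∈ Finset.Icc 1 K, Zs k ω
            = ENNReal.ofReal (if I k ω = true then s else 1) := by
          intro k hk
          rw [Finset.mem_Icc] at hk
          obtain ⟨j, rfl⟩ : ∃ j, k = j + 1 := ⟨k - 1, by omega⟩
          show ENNReal.ofReal (if (Y (j+1) ω).2 = true then s else 1) = _
          rw [hYsnd]
        rw [Finset.prod_congr rfl h1, ← ENNReal.ofReal_prod_of_nonneg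
          (fun k _ => by split <;> [exact hs0.le; exact zero_le_one])]
        congr 1
        rw [Finset.prod_ite, Finset.prod_const, Finset.prod_const, one_pow, mul_one]
      by_cases hτK : τ K ω ≤ n
      · have hcard : ((Finset.Icc 1 K).filter fun k => I k ω = true).card ≤ M n ω := by
          rw [hM]
          have hsub : (((Finset.Icc 1 K).filter fun k => I k ω = true) : Set ℕ)
              ⊆ {k | 1 ≤ k ∧ τ k ω ≤ n ∧ I k ω = true} := by
            intro k hk
            simp only [Finset.coe_filter, Finset.mem_Icc, Set.mem_setOf_eq] at hk
            exact ⟨hk.1.1, le_trans (hτ_mono k K ω hk.1.2) hτK, hk.2⟩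
          have hfin : {k | 1 ≤ k ∧ τ k ω ≤ n ∧ I k ω = true}.Finite := by
            rw [hMset]
            exact (Finset.filter _ _).finite_toSet
          calc ((Finset.Icc 1 K).filter fun k => I k ω = true).card
              = (((Finset.Icc 1 K).filter fun k => I k ω = true) : Set ℕ).ncard :=
                (Set.ncard_coe_finset _).symm
            _ ≤ {k | 1 ≤ k ∧ τ k ω ≤ n ∧ I k ω = true}.ncard := Set.ncard_le_ncard hsub hfin
        have hle : s ^ M n ω ≤ s ^ ((Finset.Icc 1 K).filter fun k => I k ω = true).card :=
          pow_le_pow_of_le_one hs0.le hs1.le hcard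
        calc ENNReal.ofReal (s ^ M n ω)
            ≤ ENNReal.ofReal (s ^ ((Finset.Icc 1 K).filter fun k => I k ω = true).card) :=
              ENNReal.ofReal_le_ofReal hle
          _ = ∏ k ∈ Finset.Icc 1 K, Zs k ω := hprod_eq.symm
          _ ≤ _ := le_self_add
      · have hind : Set.indicator {ω | n < τ K ω} (1 : Ω → ENNReal) ω = 1 := by
          rw [Set.indicator_of_mem]
          · rfl
          · exact lt_of_not_ge hτK
        calc ENNReal.ofReal (s ^ M n ω) ≤ 1 := by
              rw [← ENNReal.ofReal_one]
              exact ENNReal.ofReal_le_ofReal (pow_le_one₀ hs0.le hs1.le)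
          _ ≤ _ := by rw [hind]; exact le_add_self
    -- put everything together
    have hmeassM : Measurable fun ω => s ^ M n ω :=
      (measurable_of_countable (fun m : ℕ => s ^ m)).comp (hmeasM n)
    have hint_eq : ∫ ω, s ^ M n ω ∂μ = (∫⁻ ω, ENNReal.ofReal (s ^ M n ω) ∂μ).toReal := by
      rw [integral_eq_lintegral_of_nonneg_ae (ae_of_all _ fun ω => by positivity)
        hmeassM.aestronglyMeasurable]
    rw [hint_eq]
    apply ENNReal.toReal_le_of_le_ofReal (by positivity)
    calc ∫⁻ ω, ENNReal.ofReal (s ^ M n ω) ∂μ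
        ≤ ∫⁻ ω, ((∏ k ∈ Finset.Icc 1 K, Zs k ω) + Set.indicator {ω | n < τ K ω} 1 ω) ∂μ :=
          lintegral_mono hpointwise
      _ = (∫⁻ ω, ∏ k ∈ Finset.Icc 1 K, Zs k ω ∂μ) + μ {ω | n < τ K ω} := by
          rw [lintegral_add_left (by
            apply Finset.measurable_prod
            exact fun k _ => hZsmeas k)]
          congr 1
          exact lintegral_indicator_one ((hmeasτ K) measurableSet_Ioi)
      _ ≤ ENNReal.ofReal (1 - q + q * s) ^ K + ENNReal.ofReal (A * B ^ K * r⁻¹ ^ n) := by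
          rw [hprodZs]
          exact add_le_add_right (hμτ n K) _
      _ = ENNReal.ofReal ((1 - q + q * s) ^ K + A * B ^ K * r⁻¹ ^ n) := by
          rw [← ENNReal.ofReal_pow hu0.le,
            ← ENNReal.ofReal_add (by positivity) (by positivity)]
  have hintpow : ∀ s : ℝ, 0 ≤ s → s ≤ 1 → ∀ n, Integrable (fun ω => s ^ M n ω) μ := by
    intro s hs0 hs1 n
    apply Integrable.mono' (integrable_const (1:ℝ))
      ((measurable_of_countable (fun m : ℕ => s ^ m)).comp (hmeasM n)).aestronglyMeasurable
    refine ae_of_all _ fun ω => ?_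
    have habs : |s ^ M n ω| ≤ 1 := by
      rw [abs_of_nonneg (pow_nonneg hs0 _)]
      exact pow_le_one₀ hs0 hs1
    simpa using habs
  have Est : ∀ s : ℝ, 0 < s → s < 1 → ∃ C θ : ℝ, 0 < C ∧ 0 < θ ∧ θ < 1 ∧
      ∀ n : ℕ, ∫ ω, s ^ M n ω ∂μ ≤ C * θ ^ n := by
    intro s hs0 hs1
    have hu0 : 0 < 1 - q + q * s := by nlinarith
    have hu1 : 1 - q + q * s < 1 := by nlinarith
    obtain ⟨C, θ, hC, hθ0, hθ1, hbound⟩ :=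
      aux_arith hu0 hu1 (lt_of_lt_of_le one_pos hA1) hB1 hr
    refine ⟨C, θ, hC, hθ0, hθ1, fun n => ?_⟩
    obtain ⟨K, hK⟩ := hbound n
    exact le_trans (key s hs0 hs1 n K) hK
  have part2 : ∀ s : ℝ, 0 < s → s < 1 →
      Filter.limsup (fun n : ℕ => (1 / (n : ℝ)) * Real.log (∫ ω, s ^ M n ω ∂μ))
        atTop < 0 := by
    intro s hs0 hs1
    obtain ⟨C, θ, hC, hθ0, hθ1, hbound⟩ := Est s hs0 hs1
    have hlogθ : Real.log θ < 0 := Real.log_neg hθ0 hθ1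
    have hpos : ∀ n : ℕ, 0 < ∫ ω, s ^ M n ω ∂μ := by
      intro n
      apply (integral_pos_iff_support_of_nonneg (fun ω => by positivity)
        (hintpow s hs0.le hs1.le n)).mpr
      have hsupp : Function.support (fun ω => s ^ M n ω) = Set.univ := by
        ext ω
        simp only [Function.mem_support, Set.mem_univ, iff_true]
        positivity
      rw [hsupp, measure_univ]
      norm_num
    have hlow : ∀ n : ℕ, s ^ n ≤ ∫ ω, s ^ M n ω ∂μ := by
      intro n
      calc s ^ n = ∫ _ω, s ^ n ∂μ := by simp
      _ ≤ ∫ ω, s ^ M n ω ∂μ := integral_mono (integrable_const _)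
          (hintpow s hs0.le hs1.le n)
          (fun ω => pow_le_pow_of_le_one hs0.le hs1.le (hMn_le n ω))
    have hfb : ∀ n : ℕ, min 0 (Real.log s)
        ≤ (1 / (n : ℝ)) * Real.log (∫ ω, s ^ M n ω ∂μ) := by
      intro n
      match n with
      | 0 => simp
      | n+1 =>
        have h1 : ((n+1 : ℕ):ℝ) * Real.log s ≤ Real.log (∫ ω, s ^ M (n+1) ω ∂μ) := by
          rw [← Real.log_pow]
          exact Real.log_le_log (by positivity) (hlow (n+1))
        have h2 : (0:ℝ) < ((n+1 : ℕ):ℝ) := by positivity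
        have h3 := mul_le_mul_of_nonneg_left h1 (by positivity : (0:ℝ) ≤ 1 / ((n+1:ℕ):ℝ))
        refine le_trans (min_le_right _ _) (le_trans ?_ h3)
        rw [← mul_assoc, one_div, inv_mul_cancel₀ h2.ne']
        simp
    have hbdd : IsBoundedUnder (· ≥ ·) atTop
        (fun n : ℕ => (1 / (n : ℝ)) * Real.log (∫ ω, s ^ M n ω ∂μ)) :=
      isBoundedUnder_of (f := atTop)
        (u := fun n : ℕ => (1 / (n : ℝ)) * Real.log (∫ ω, s ^ M n ω ∂μ))
        ⟨min 0 (Real.log s), fun n => hfb n⟩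
    have hcob : IsCoboundedUnder (· ≤ ·) atTop
        (fun n : ℕ => (1 / (n : ℝ)) * Real.log (∫ ω, s ^ M n ω ∂μ)) :=
      hbdd.isCoboundedUnder_le
    have htend : Filter.Tendsto (fun n : ℕ => Real.log C * (1 / (n:ℝ))) atTop (nhds 0) := by
      simpa using tendsto_one_div_atTop_nhds_zero_nat.const_mul (Real.log C)
    have hev1 : ∀ᶠ n : ℕ in atTop, Real.log C * (1 / (n:ℝ)) < - Real.log θ / 2 :=
      htend.eventually_lt_const (by linarith)
    have hev : ∀ᶠ n : ℕ in atTop,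
        (1 / (n : ℝ)) * Real.log (∫ ω, s ^ M n ω ∂μ) ≤ Real.log θ / 2 := by
      filter_upwards [hev1, Filter.eventually_ge_atTop 1] with n h1 hn1
      have hn0 : (0:ℝ) < (n:ℝ) := by exact_mod_cast hn1
      have hlog1 : Real.log (∫ ω, s ^ M n ω ∂μ) ≤ Real.log (C * θ ^ n) :=
        Real.log_le_log (hpos n) (hbound n)
      have hlog2 : Real.log (C * θ ^ n) = Real.log C + n * Real.log θ := by
        rw [Real.log_mul hC.ne' (by positivity), Real.log_pow]
      have h4 : (1 / (n : ℝ)) * Real.log (∫ ω, s ^ M n ω ∂μ)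
          ≤ (1 / (n : ℝ)) * (Real.log C + n * Real.log θ) := by
        apply mul_le_mul_of_nonneg_left _ (by positivity)
        rw [← hlog2]; exact hlog1
      have h5 : (1 / (n : ℝ)) * (Real.log C + n * Real.log θ)
          = Real.log C * (1/(n:ℝ)) + Real.log θ := by
        field_simp
      rw [h5] at h4
      linarith
    have hlim := Filter.limsup_le_of_le hcob hev
    exact lt_of_le_of_lt hlim (by linarith)
  refine ⟨?_, part2⟩
  obtain ⟨C, θ, hC, hθ0, hθ1, hbound⟩ := Est (1/2) (by norm_num) (by norm_num)
  set r' : ℝ := (1 + θ⁻¹) / 2 with hr'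
  have hθinv : 1 < θ⁻¹ := (one_lt_inv₀ hθ0).mpr hθ1
  have hr'1 : 1 < r' := by rw [hr']; linarith
  have hr'θ : r' * θ < 1 := by
    have h1 : r' < θ⁻¹ := by rw [hr']; linarith
    calc r' * θ < θ⁻¹ * θ := mul_lt_mul_of_pos_right h1 hθ0
    _ = 1 := inv_mul_cancel₀ hθ0.ne'
  have hr'0 : (0:ℝ) < r' := lt_trans one_pos hr'1
  -- tail bound for M
  have hμM : ∀ n j : ℕ, j ≤ 1 → μ {ω | M n ω ≤ j} ≤ ENNReal.ofReal (2 * (C * θ ^ n)) := by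
    intro n j hj
    have hmeasset : MeasurableSet {ω | M n ω ≤ j} := hmeasM n measurableSet_Iic
    have hint : Integrable (fun ω => ((1:ℝ)/2) ^ M n ω) μ :=
      hintpow (1/2) (by norm_num) (by norm_num) n
    have hpoint : ∀ ω, Set.indicator {ω | M n ω ≤ j} (1 : Ω → ENNReal) ω
        ≤ ENNReal.ofReal (2 * ((1/2 : ℝ) ^ M n ω)) := by
      intro ω
      by_cases hω : M n ω ≤ j
      · rw [Set.indicator_of_mem (show ω ∈ {ω | M n ω ≤ j} from hω)]
        have h1 : ((1:ℝ)/2) ^ M n ω ≥ (1/2) ^ (1:ℕ) :=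
          pow_le_pow_of_le_one (by norm_num) (by norm_num) (le_trans hω hj)
        have h2 : (1:ℝ) ≤ 2 * ((1/2 : ℝ) ^ M n ω) := by
          rw [pow_one] at h1
          linarith
        calc (1 : ENNReal) = ENNReal.ofReal 1 := ENNReal.ofReal_one.symm
        _ ≤ ENNReal.ofReal (2 * ((1/2 : ℝ) ^ M n ω)) := ENNReal.ofReal_le_ofReal h2
      · rw [Set.indicator_of_notMem (show ω ∉ {ω | M n ω ≤ j} from hω)]
        exact bot_le
    calc μ {ω | M n ω ≤ j}
        = ∫⁻ ω, Set.indicator {ω | M n ω ≤ j} 1 ω ∂μ := (lintegral_indicator_one hmeasset).symm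
      _ ≤ ∫⁻ ω, ENNReal.ofReal (2 * ((1/2 : ℝ) ^ M n ω)) ∂μ := lintegral_mono hpoint
      _ = ENNReal.ofReal (∫ ω, 2 * ((1/2 : ℝ) ^ M n ω) ∂μ) :=
          (ofReal_integral_eq_lintegral_ofReal (hint.const_mul 2)
            (ae_of_all _ fun ω => by positivity)).symm
      _ ≤ ENNReal.ofReal (2 * (C * θ ^ n)) := by
          apply ENNReal.ofReal_le_ofReal
          rw [integral_const_mul]
          have := hbound n
          linarith [hbound n]
  -- tail bound for ρ
  have hD : (0:ℝ) < 2 * C / θ + 1 := by positivity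
  have hρtail : ∀ j : ℕ, j ≤ 1 → ∀ v : ℕ,
      μ {ω | ρ j ω = v} ≤ ENNReal.ofReal ((2 * C / θ + 1) * θ ^ v) := by
    intro j hj v
    match v with
    | 0 =>
      calc μ {ω | ρ j ω = 0} ≤ 1 := prob_le_one
      _ = ENNReal.ofReal 1 := ENNReal.ofReal_one.symm
      _ ≤ ENNReal.ofReal ((2 * C / θ + 1) * θ ^ 0) := by
          apply ENNReal.ofReal_le_ofReal
          rw [pow_zero, mul_one]
          have : 0 < 2 * C / θ := by positivity
          linarith
    | v + 1 =>
      have hsub : {ω | ρ j ω = v + 1} ⊆ {ω | M v ω ≤ j} := by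
        intro ω hω
        simp only [Set.mem_setOf_eq] at hω ⊢
        have hv : v < sInf {n : ℕ | j + 1 ≤ M n ω} := by rw [← hρ j ω, hω]; omega
        have := Nat.notMem_of_lt_sInf hv
        simp only [Set.mem_setOf_eq] at this
        omega
      calc μ {ω | ρ j ω = v + 1} ≤ μ {ω | M v ω ≤ j} := measure_mono hsub
      _ ≤ ENNReal.ofReal (2 * (C * θ ^ v)) := hμM v j hj
      _ = ENNReal.ofReal ((2 * C / θ) * θ ^ (v+1)) := by
          congr 1
          field_simp
          ring
      _ ≤ ENNReal.ofReal ((2 * C / θ + 1) * θ ^ (v+1)) := by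
          apply ENNReal.ofReal_le_ofReal
          have : (0:ℝ) ≤ θ ^ (v+1) := by positivity
          nlinarith
  -- integrability of r' ^ ρ j
  have hρint : ∀ j : ℕ, j ≤ 1 → Integrable (fun ω => r' ^ ρ j ω) μ := by
    intro j hj
    have hmeasf : Measurable fun ω => r' ^ ρ j ω :=
      (measurable_of_countable (fun m : ℕ => r' ^ m)).comp (hmeasρ j)
    refine ⟨hmeasf.aestronglyMeasurable, ?_⟩
    rw [hasFiniteIntegral_iff_ofReal (ae_of_all _ fun ω => by positivity)]
    have hdecomp : ∫⁻ ω, ENNReal.ofReal (r' ^ ρ j ω) ∂μ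
        = ∑' v : ℕ, ENNReal.ofReal (r' ^ v) * μ {ω | ρ j ω = v} := by
      rw [← lintegral_map (measurable_of_countable (fun m : ℕ => ENNReal.ofReal (r' ^ m)))
        (hmeasρ j), lintegral_countable']
      congr 1
      funext v
      rw [Measure.map_apply (hmeasρ j) (measurableSet_singleton v)]
      rfl
    rw [hdecomp]
    have hsummable : Summable (fun v : ℕ => (2 * C / θ + 1) * r' * (r' * θ) ^ v) :=
      (summable_geometric_of_lt_one (by positivity) hr'θ).mul_left _
    calc ∑' v : ℕ, ENNReal.ofReal (r' ^ v) * μ {ω | ρ j ω = v}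
        ≤ ∑' v : ℕ, ENNReal.ofReal ((2 * C / θ + 1) * r' * (r' * θ) ^ v) := by
          apply ENNReal.tsum_le_tsum
          intro v
          calc ENNReal.ofReal (r' ^ v) * μ {ω | ρ j ω = v}
              ≤ ENNReal.ofReal (r' ^ v) * ENNReal.ofReal ((2 * C / θ + 1) * θ ^ v) :=
                mul_le_mul_right (hρtail j hj v) _
            _ = ENNReal.ofReal (r' ^ v * ((2 * C / θ + 1) * θ ^ v)) :=
                (ENNReal.ofReal_mul (by positivity)).symm
            _ ≤ ENNReal.ofReal ((2 * C / θ + 1) * r' * (r' * θ) ^ v) := by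
                apply ENNReal.ofReal_le_ofReal
                rw [mul_pow]
                calc r' ^ v * ((2 * C / θ + 1) * θ ^ v)
                    = (2 * C / θ + 1) * (r' ^ v * θ ^ v) * 1 := by ring
                  _ ≤ (2 * C / θ + 1) * (r' ^ v * θ ^ v) * r' :=
                      mul_le_mul_of_nonneg_left hr'1.le (by positivity)
                  _ = (2 * C / θ + 1) * r' * (r' ^ v * θ ^ v) := by ring
      _ = ENNReal.ofReal (∑' v : ℕ, (2 * C / θ + 1) * r' * (r' * θ) ^ v) :=
          (ENNReal.ofReal_tsum_of_nonneg (fun v => by positivity) hsummable).symm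
      _ < ⊤ := ENNReal.ofReal_lt_top
  -- conclude
  refine ⟨r', hr'1, hρint 0 (by norm_num), ?_⟩
  have hmeasf : Measurable fun ω => r' ^ (ρ 1 ω - ρ 0 ω) :=
    (measurable_of_countable (fun m : ℕ => r' ^ m)).comp ((hmeasρ 1).sub (hmeasρ 0))
  apply Integrable.mono' (hρint 1 (by norm_num)) hmeasf.aestronglyMeasurable
  refine ae_of_all _ fun ω => ?_
  have h1 : r' ^ (ρ 1 ω - ρ 0 ω) ≤ r' ^ ρ 1 ω :=
    pow_le_pow_right₀ hr'1.le (Nat.sub_le _ _)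
  have h2 : |r' ^ (ρ 1 ω - ρ 0 ω)| = r' ^ (ρ 1 ω - ρ 0 ω) :=
    abs_of_nonneg (by positivity)
  calc ‖r' ^ (ρ 1 ω - ρ 0 ω)‖ = r' ^ (ρ 1 ω - ρ 0 ω) := by
        rw [Real.norm_eq_abs, h2]
    _ ≤ r' ^ ρ 1 ω := h1
end

section
/- Let ζ be a positive random variable whose distribution function F_ζ satisfies F_ζ(x) ≤ C_γ x^γ for all x ≥ 0, for some γ ≥ 0 and constant C_γ < ∞, and whose density f_ζ satisfies f_ζ(x) ≤ ∫_{𝒮₁} F_ζ(s₁^α x) ν(ds) for all x > 0, where α < 0 and ν is a probability measure on 𝒮₁ with ∫_{𝒮₁} s₁^{αγ} ν(ds) < ∞. Then F_ζ(x) ≤ C' x^{γ+1} for all x ≥ 0 for some constant C' < ∞. -/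
open MeasureTheory Filter Topology

/-- The space `𝒮₁` of nonincreasing sequences of nonnegative reals summing to `1`,
with the measurable structure inherited from `ℕ → ℝ`. -/
def S1 : Set (ℕ → ℝ) := {s | Antitone s ∧ (∀ i, 0 ≤ s i) ∧ HasSum s 1}

/-- Bootstrapping step: if `F(x) ≤ Cγ x^γ`, `F(x) = ∫₀ˣ f`, and the density satisfies
`f(x) ≤ ∫ F(s₁^α x) ν(ds)` with `∫ s₁^{αγ} ν(ds) < ∞` (`α < 0`), then
`F(x) ≤ C' x^{γ+1}` for some constant `C'`. -/
theorem stmt7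
    (ν : Measure S1) [IsProbabilityMeasure ν]
    (α γ Cγ : ℝ) (hα : α < 0) (hγ : 0 ≤ γ)
    (F f : ℝ → ℝ)
    (hf_nonneg : ∀ x, 0 ≤ f x) (hf_meas : Measurable f)
    (hf_int : ∀ x : ℝ, IntegrableOn f (Set.Ioc 0 x))
    (hF : ∀ x : ℝ, F x = ∫ t in Set.Ioc (0:ℝ) x, f t)
    (hFbound : ∀ x : ℝ, 0 ≤ x → F x ≤ Cγ * x ^ γ)
    (hfF : ∀ x : ℝ, 0 < x → f x ≤ ∫ s : S1, F ((s.1 0) ^ α * x) ∂ν)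
    (hmom : Integrable (fun s : S1 => (s.1 0) ^ (α * γ)) ν) :
    ∃ C' : ℝ, ∀ x : ℝ, 0 ≤ x → F x ≤ C' * x ^ (γ + 1) := by
  have hF_nonneg : ∀ y : ℝ, 0 ≤ F y := by
    intro y
    rw [hF]
    exact setIntegral_nonneg measurableSet_Ioc fun t _ => hf_nonneg t
  have hs0 : ∀ s : S1, 0 < s.1 0 := by
    rintro ⟨s, hanti, hnn, hsum⟩
    by_contra h
    push_neg at h
    have h0 : s 0 = 0 := le_antisymm h (hnn 0)
    have hall : ∀ i, s i = 0 := fun i =>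
      le_antisymm (h0 ▸ hanti (Nat.zero_le i)) (hnn i)
    have hz : HasSum s 0 := by
      have : s = fun _ => (0 : ℝ) := funext hall
      simpa [this] using hasSum_zero
    exact one_ne_zero (hsum.unique hz)
  set M : ℝ := ∫ s : S1, (s.1 0) ^ (α * γ) ∂ν with hM
  have key : ∀ t : ℝ, 0 < t → f t ≤ Cγ * M * t ^ γ := by
    intro t ht
    refine (hfF t ht).trans ?_
    have h1 : ∫ s : S1, F ((s.1 0) ^ α * t) ∂ν
        ≤ ∫ s : S1, Cγ * ((s.1 0) ^ (α * γ) * t ^ γ) ∂ν := by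
      refine integral_mono_of_nonneg
        (Filter.Eventually.of_forall fun s => hF_nonneg _)
        (((hmom.mul_const (t ^ γ)).const_mul Cγ)) ?_
      refine Filter.Eventually.of_forall fun s => ?_
      have hs := hs0 s
      have hpos : 0 < (s.1 0) ^ α := Real.rpow_pos_of_pos hs α
      have hb := hFbound ((s.1 0) ^ α * t) (by positivity)
      calc F ((s.1 0) ^ α * t) ≤ Cγ * ((s.1 0) ^ α * t) ^ γ := hb
        _ = Cγ * ((s.1 0) ^ (α * γ) * t ^ γ) := by
            rw [Real.mul_rpow hpos.le ht.le, Real.rpow_mul hs.le]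
    calc ∫ s : S1, F ((s.1 0) ^ α * t) ∂ν
        ≤ ∫ s : S1, Cγ * ((s.1 0) ^ (α * γ) * t ^ γ) ∂ν := h1
      _ = Cγ * M * t ^ γ := by
          rw [integral_const_mul, integral_mul_const]
          ring
  have hγ1 : (0:ℝ) < γ + 1 := by linarith
  refine ⟨Cγ * M / (γ + 1), fun x hx => ?_⟩
  have hint : IntegrableOn (fun t => Cγ * M * t ^ γ) (Set.Ioc 0 x) := by
    have h : IntervalIntegrable (fun t : ℝ => t ^ γ) volume 0 x :=
      intervalIntegral.intervalIntegrable_rpow' (by linarith)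
    exact (((intervalIntegrable_iff_integrableOn_Ioc_of_le hx).mp h)).const_mul _
  rw [hF]
  have step : ∫ t in Set.Ioc 0 x, f t ≤ ∫ t in Set.Ioc 0 x, Cγ * M * t ^ γ :=
    setIntegral_mono_on (hf_int x) hint measurableSet_Ioc fun t ht => key t ht.1
  refine step.trans ?_
  have hval : ∫ t in Set.Ioc 0 x, Cγ * M * t ^ γ
      = Cγ * M * ((x ^ (γ + 1) - (0:ℝ) ^ (γ + 1)) / (γ + 1)) := by
    rw [← intervalIntegral.integral_of_le hx, intervalIntegral.integral_const_mul,
      integral_rpow (Or.inl (by linarith))]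
  rw [hval, Real.zero_rpow hγ1.ne']
  ring_nf
  exact le_rfl
end

section
/- Fix α < 0, r ∈ (0,1), and a sequence (ε_n) of positive reals with ε_n → 0. Suppose X is a random variable such that for every a > 0, along the subsequence ε_n = a r^{−αn}, the random variables ε_n^{1/α} X_n (where X_n takes values in r^ℤ almost surely) converge in distribution to some limit L. Then L is supported on a^{1/α} r^ℤ ∪ {0} for every a > 0, and since the sets a^{1/α} r^ℤ for different a ∈ (0,∞) intersect only in ∅ or require L = 0, any common distributional limit of ε^{1/α} X over all ε → 0 must be the constant 0. -/
open MeasureTheory Filter Topology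

lemma lattice_closed {r : ℝ} (hr0 : 0 < r) (hr1 : r < 1) {c : ℝ} (hc : 0 < c) :
    IsClosed {x : ℝ | x = 0 ∨ ∃ k : ℤ, x = c * r ^ k} := by
  rw [← isOpen_compl_iff, isOpen_iff_mem_nhds]
  intro x hx
  simp only [Set.mem_compl_iff, Set.mem_setOf_eq, not_or, not_exists] at hx
  obtain ⟨hx0, hxk⟩ := hx
  have hrne : r ≠ 1 := ne_of_lt hr1
  rcases lt_trichotomy x 0 with h | h | h
  · filter_upwards [Iio_mem_nhds h] with y hy
    simp only [Set.mem_compl_iff, Set.mem_setOf_eq, not_or, not_exists]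
    refine ⟨ne_of_lt hy, fun k hk => ?_⟩
    have : 0 < c * r ^ k := by positivity
    rw [hk] at hy
    simp only [Set.mem_Iio] at hy
    linarith
  · exact absurd h hx0
  · set u := Real.log (x / c) / Real.log r with hu
    set k := ⌊u⌋ with hk
    have hlogr : Real.log r < 0 := Real.log_neg hr0 hr1
    have hxc : x / c = r ^ u := by
      rw [Real.rpow_def_of_pos hr0, hu]
      rw [mul_comm, div_mul_cancel₀ _ (ne_of_lt hlogr), Real.exp_log (by positivity)]
    have hne : ∀ m : ℤ, u ≠ (m : ℝ) := by
      intro m hm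
      apply hxk m
      have : x / c = r ^ (m : ℝ) := by rw [← hm]; exact hxc
      rw [Real.rpow_intCast] at this
      field_simp at this
      linarith [this]
    have hklt : (k : ℝ) < u := lt_of_le_of_ne (Int.floor_le u) (Ne.symm (hne k))
    have hltk : u < (k : ℝ) + 1 := Int.lt_floor_add_one u
    have key : x ∈ Set.Ioo (c * r ^ (k + 1)) (c * r ^ k) := by
      have h1 : r ^ ((k : ℝ) + 1) < r ^ u :=
        (Real.rpow_lt_rpow_left_iff_of_base_lt_one hr0 hr1).mpr hltk
      have h2 : r ^ u < r ^ (k : ℝ) :=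
        (Real.rpow_lt_rpow_left_iff_of_base_lt_one hr0 hr1).mpr hklt
      have e1 : r ^ ((k : ℝ) + 1) = r ^ (k + 1 : ℤ) := by
        rw [← Real.rpow_intCast r (k+1)]; push_cast; ring_nf
      have e2 : r ^ ((k : ℝ)) = r ^ (k : ℤ) := by rw [← Real.rpow_intCast r k]
      have hx' : x = c * r ^ u := by
        field_simp at hxc; linarith [hxc]
      constructor
      · rw [hx', ← e1]; exact (mul_lt_mul_iff_right₀ hc).mpr h1
      · rw [hx', ← e2]; exact (mul_lt_mul_iff_right₀ hc).mpr h2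
    filter_upwards [Ioo_mem_nhds key.1 key.2] with y hy
    simp only [Set.mem_compl_iff, Set.mem_setOf_eq, not_or, not_exists]
    constructor
    · have : 0 < c * r ^ (k + 1) := by positivity
      intro h0; rw [h0] at hy; exact absurd hy.1 (by linarith)
    · intro m hm
      rw [hm] at hy
      obtain ⟨hy1, hy2⟩ := hy
      rw [mul_lt_mul_iff_right₀ hc] at hy1 hy2
      have hm1 : m < k + 1 := (zpow_lt_zpow_iff_right_of_lt_one₀ hr0 hr1).mp hy1
      have hm2 : k < m := (zpow_lt_zpow_iff_right_of_lt_one₀ hr0 hr1).mp hy2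
      omega

/-- The truncated distance to a set, as a bounded continuous function. -/
noncomputable def truncDist (S : Set ℝ) : BoundedContinuousFunction ℝ ℝ :=
  BoundedContinuousFunction.mkOfBound
    ⟨fun x => min (Metric.infDist x S) 1,
      (Metric.continuous_infDist_pt S).min continuous_const⟩ 1
    (by
      intro x y
      have h1 : 0 ≤ min (Metric.infDist x S) 1 := le_min Metric.infDist_nonneg zero_le_one
      have h2 : 0 ≤ min (Metric.infDist y S) 1 := le_min Metric.infDist_nonneg zero_le_one
      have h3 : min (Metric.infDist x S) 1 ≤ 1 := min_le_right _ _
      have h4 : min (Metric.infDist y S) 1 ≤ 1 := min_le_right _ _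
      rw [Real.dist_eq, abs_sub_le_iff]
      constructor <;> simp only [ContinuousMap.coe_mk] <;> linarith)

/-- Non-convergence step for geometric fragmentations.  Suppose `X n` takes values a.s.
in the multiplicative lattice `r^ℤ` and, for every `a > 0`, along the subsequence
`ε_n = a r^{−αn}` (so that `ε_n^{1/α} = a^{1/α} r^{−n}`), the variables
`ε_n^{1/α} X n` converge in distribution to `L`.  Then `L` is supported on
`a^{1/α} r^ℤ ∪ {0}` for every `a > 0`, and consequently `L = 0` almost surely. -/
theorem stmt13
    {Ω : Type*} [MeasurableSpace Ω] (μ : Measure Ω) [IsProbabilityMeasure μ]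
    (α r : ℝ) (hα : α < 0) (hr0 : 0 < r) (hr1 : r < 1)
    (X : ℕ → Ω → ℝ) (hmeasX : ∀ n, Measurable (X n))
    (L : Ω → ℝ) (hmeasL : Measurable L)
    (hlat : ∀ n, ∀ᵐ ω ∂μ, ∃ k : ℤ, X n ω = r ^ k)
    (hconv : ∀ a : ℝ, 0 < a → ∀ f : BoundedContinuousFunction ℝ ℝ,
      Tendsto (fun n : ℕ => ∫ ω, f ((a ^ (1 / α) * r ^ (-(n : ℤ))) * X n ω) ∂μ)
        atTop (𝓝 (∫ ω, f (L ω) ∂μ))) :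
    (∀ a : ℝ, 0 < a → ∀ᵐ ω ∂μ, L ω = 0 ∨ ∃ k : ℤ, L ω = a ^ (1 / α) * r ^ k) ∧
    ∀ᵐ ω ∂μ, L ω = 0 := by
  have hrne : r ≠ 0 := ne_of_gt hr0
  have main : ∀ a : ℝ, 0 < a → ∀ᵐ ω ∂μ, L ω = 0 ∨ ∃ k : ℤ, L ω = a ^ (1 / α) * r ^ k := by
    intro a ha
    set c := a ^ (1 / α) with hc_def
    have hc : 0 < c := Real.rpow_pos_of_pos ha _
    set S : Set ℝ := {x : ℝ | x = 0 ∨ ∃ k : ℤ, x = c * r ^ k} with hS_def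
    have hSclosed : IsClosed S := lattice_closed hr0 hr1 hc
    have hSne : S.Nonempty := ⟨0, Or.inl rfl⟩
    set f := truncDist S with hf_def
    have hfval : ∀ x ∈ S, f x = 0 := by
      intro x hxS
      show min (Metric.infDist x S) 1 = 0
      rw [Metric.infDist_zero_of_mem hxS]
      simp
    -- each integral in the sequence is zero
    have hzero : ∀ n : ℕ, (∫ ω, f ((c * r ^ (-(n : ℤ))) * X n ω) ∂μ) = 0 := by
      intro n
      rw [integral_eq_zero_of_ae]
      filter_upwards [hlat n] with ω ⟨k, hk⟩
      rw [hk]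
      apply hfval
      right
      exact ⟨k - n, by rw [mul_assoc, ← zpow_add₀ hrne]; ring_nf⟩
    have hlim := hconv a ha f
    have hlim0 : Tendsto (fun n : ℕ => ∫ ω, f ((c * r ^ (-(n : ℤ))) * X n ω) ∂μ)
        atTop (𝓝 0) := by
      rw [show (fun n : ℕ => ∫ ω, f ((c * r ^ (-(n : ℤ))) * X n ω) ∂μ) = fun _ => (0:ℝ)
        from funext hzero]
      exact tendsto_const_nhds
    have hint0 : (∫ ω, f (L ω) ∂μ) = 0 := tendsto_nhds_unique hlim hlim0
    have hnonneg : 0 ≤ᵐ[μ] fun ω => f (L ω) :=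
      Filter.Eventually.of_forall fun ω => le_min Metric.infDist_nonneg zero_le_one
    have hintg : Integrable (fun ω => f (L ω)) μ := by
      apply Integrable.mono' (integrable_const (1:ℝ))
        ((f.continuous.measurable.comp hmeasL).aestronglyMeasurable)
      filter_upwards with ω
      show ‖f (L ω)‖ ≤ 1
      have h0 : f (L ω) = min (Metric.infDist (L ω) S) 1 := rfl
      have h1 : 0 ≤ min (Metric.infDist (L ω) S) 1 := le_min Metric.infDist_nonneg zero_le_one
      have h2 : min (Metric.infDist (L ω) S) 1 ≤ 1 := min_le_right _ _
      rw [h0, Real.norm_eq_abs, abs_le]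
      exact ⟨by linarith, h2⟩
    have hae := (integral_eq_zero_iff_of_nonneg_ae hnonneg hintg).mp hint0
    filter_upwards [hae] with ω hω
    have : Metric.infDist (L ω) S = 0 := by
      have h' : min (Metric.infDist (L ω) S) 1 = 0 := hω
      rcases min_eq_iff.mp h' with ⟨h1, _⟩ | ⟨h1, _⟩
      · exact h1
      · norm_num at h1
    exact (hSclosed.mem_iff_infDist_zero hSne).mpr this
  refine ⟨main, ?_⟩
  have h1 := main 1 one_pos
  have h2 := main (r ^ (α / 2)) (Real.rpow_pos_of_pos hr0 _)
  have hαne : α ≠ 0 := ne_of_lt hα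
  have hrpow : (r ^ (α / 2) : ℝ) ^ (1 / α) = r ^ (1/2 : ℝ) := by
    rw [← Real.rpow_mul hr0.le]
    congr 1
    field_simp
  have hlogr : Real.log r < 0 := Real.log_neg hr0 hr1
  filter_upwards [h1, h2] with ω hω1 hω2
  rcases hω1 with h | ⟨k, hk⟩
  · exact h
  rcases hω2 with h | ⟨m, hm⟩
  · exact h
  exfalso
  rw [Real.one_rpow, one_mul] at hk
  rw [hrpow] at hm
  have heq : (r : ℝ) ^ k = r ^ (1/2 : ℝ) * r ^ m := hk ▸ hm
  have hlog : (k : ℝ) * Real.log r = (1/2 : ℝ) * Real.log r + (m : ℝ) * Real.log r := by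
    have h1' := congrArg Real.log heq
    rw [Real.log_zpow, Real.log_mul (by positivity) (by positivity),
      Real.log_rpow hr0, Real.log_zpow] at h1'
    linarith [h1']
  have : (k : ℝ) = 1/2 + (m : ℝ) := by
    have hne : Real.log r ≠ 0 := ne_of_lt hlogr
    field_simp at hlog
    rcases mul_eq_mul_right_iff.mp (by rw [show (k:ℝ) = 1/2 + m by linarith] : (k:ℝ) * Real.log r = (1/2 + m) * Real.log r) with h | h
    · linarith
    · exact absurd h hne
  have h2k : ((2 * k : ℤ) : ℝ) = ((1 + 2 * m : ℤ) : ℝ) := by push_cast; linarith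
  have := Int.cast_injective h2k
  omega
end

section
/- Let (c_n)_{n ∈ ℕ ∪ {∞}} be real-valued nondecreasing piecewise-constant càdlàg functions on [0,∞) defined by c_n(0) = 0 and c_n(t) = b_n(k) for r_n(k+1) ≤ t < r_n(k), where for each n, (r_n(k))_{k∈ℤ} is strictly decreasing in k with r_n(k) → 0 as k → +∞ and r_n(k) → ∞ as k → −∞. If r_n(k) → r_∞(k) and b_n(k) → b_∞(k) as n → ∞ for every k ∈ ℤ, then c_n → c_∞ in the Skorokhod J₁ topology on càdlàg functions [0,∞) → ℝ. -/
open Filter Topology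

/-- Skorokhod convergence of real-valued càdlàg functions on `[0,∞)`, via the
Ethier–Kurtz sequential characterisation (Proposition 3.6.5 of Ethier–Kurtz):
for all sequences `t_n → t ≥ 0`,
(a) `min(|f_n(t_n) − g(t)|, |f_n(t_n) − g(t−)|) → 0`;
(b) if `f_n(t_n) → g(t)`, then `f_n(s_n) → g(t)` for every `s_n → t` with `s_n ≥ t_n`;
(c) if `f_n(t_n) → g(t−)`, then `f_n(s_n) → g(t−)` for every `s_n → t` with `s_n ≤ t_n`. -/
def SkorokhodTendsto (f : ℕ → ℝ → ℝ) (g : ℝ → ℝ) : Prop :=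
  ∀ t : ℝ, 0 ≤ t → ∀ tseq : ℕ → ℝ, (∀ n, 0 ≤ tseq n) → Tendsto tseq atTop (𝓝 t) →
    (Tendsto (fun n => min |f n (tseq n) - g t| |f n (tseq n) - Function.leftLim g t|)
        atTop (𝓝 0)) ∧
    (Tendsto (fun n => f n (tseq n)) atTop (𝓝 (g t)) →
      ∀ sseq : ℕ → ℝ, (∀ n, tseq n ≤ sseq n) → Tendsto sseq atTop (𝓝 t) →
        Tendsto (fun n => f n (sseq n)) atTop (𝓝 (g t))) ∧
    (Tendsto (fun n => f n (tseq n)) atTop (𝓝 (Function.leftLim g t)) →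
      ∀ sseq : ℕ → ℝ, (∀ n, sseq n ≤ tseq n) → Tendsto sseq atTop (𝓝 t) →
        Tendsto (fun n => f n (sseq n)) atTop (𝓝 (Function.leftLim g t)))

private lemma tendsto_of_eventually_or {f g h : ℕ → ℝ} {L : ℝ}
    (hfg : ∀ᶠ n in atTop, f n = g n ∨ f n = h n)
    (hg : Tendsto g atTop (𝓝 L)) (hh : Tendsto h atTop (𝓝 L)) :
    Tendsto f atTop (𝓝 L) := by
  rw [tendsto_iff_dist_tendsto_zero] at *
  refine squeeze_zero' (.of_forall fun n => dist_nonneg)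
    (hfg.mono ?_) (by simpa using hg.max hh)
  rintro n (h1 | h1) <;> rw [h1]
  · exact le_max_left _ _
  · exact le_max_right _ _



/-- Nondecreasing piecewise-constant càdlàg functions `c n`, equal to `b n k` on
`[r n (k+1), r n k)` and `0` at (and below) `0`, converge in the Skorokhod topology to
the limit function `cI` of the same form, provided `r n k → rI k` and
`b n k → bI k` for every `k ∈ ℤ`. -/
theorem stmt14
    (r : ℕ → ℤ → ℝ) (b : ℕ → ℤ → ℝ) (rI : ℤ → ℝ) (bI : ℤ → ℝ)
    (c : ℕ → ℝ → ℝ) (cI : ℝ → ℝ)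
    (hr_anti : ∀ n, StrictAnti (r n)) (hrI_anti : StrictAnti rI)
    (hr_top : ∀ n, Tendsto (r n) atTop (𝓝 0))
    (hr_bot : ∀ n, Tendsto (r n) atBot atTop)
    (hrI_top : Tendsto rI atTop (𝓝 0)) (hrI_bot : Tendsto rI atBot atTop)
    (hc0 : ∀ n, ∀ t : ℝ, t ≤ 0 → c n t = 0)
    (hcI0 : ∀ t : ℝ, t ≤ 0 → cI t = 0)
    (hc : ∀ n, ∀ k : ℤ, ∀ t : ℝ, r n (k + 1) ≤ t → t < r n k → c n t = b n k)
    (hcI : ∀ k : ℤ, ∀ t : ℝ, rI (k + 1) ≤ t → t < rI k → cI t = bI k)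
    (hmono : ∀ n, Monotone (c n)) (hmonoI : Monotone cI)
    (hb_top : ∀ n, Tendsto (b n) atTop (𝓝 0)) (hbI_top : Tendsto bI atTop (𝓝 0))
    (hr_conv : ∀ k : ℤ, Tendsto (fun n => r n k) atTop (𝓝 (rI k)))
    (hb_conv : ∀ k : ℤ, Tendsto (fun n => b n k) atTop (𝓝 (bI k))) :
    SkorokhodTendsto c cI := by
  -- basic positivity facts
  have hrIpos : ∀ k, 0 < rI k := by
    intro k
    have h0 : (0:ℝ) ≤ rI (k+1) :=
      le_of_tendsto hrI_top (eventually_atTop.2 ⟨k+1, fun j hj => hrI_anti.antitone hj⟩)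
    exact h0.trans_lt (hrI_anti (lt_add_one k))
  have hcnonneg : ∀ n s, 0 ≤ c n s := by
    intro n s
    rcases le_or_gt s 0 with h | h
    · rw [hc0 n s h]
    · calc (0:ℝ) = c n 0 := (hc0 n 0 le_rfl).symm
        _ ≤ c n s := hmono n h.le
  have hcle : ∀ n (k : ℤ) s, s < r n k → c n s ≤ b n k := by
    intro n k s hs
    calc c n s ≤ c n (max s (r n (k+1))) := hmono n (le_max_left _ _)
      _ = b n k := hc n k _ (le_max_right _ _)
          (max_lt hs (hr_anti n (lt_add_one k)))
  -- convergence to 0 for sequences tending to 0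
  have hzero : ∀ s : ℕ → ℝ, Tendsto s atTop (𝓝 0) →
      Tendsto (fun n => c n (s n)) atTop (𝓝 0) := by
    intro s hs
    rw [Metric.tendsto_atTop]
    intro ε hε
    obtain ⟨K, hK⟩ := (hbI_top.eventually_lt_const (by positivity : (0:ℝ) < ε/2)).exists
    have h1 : ∀ᶠ n in atTop, b n K < ε :=
      (hb_conv K).eventually_lt_const (by linarith)
    have h2 : ∀ᶠ n in atTop, s n < r n K := hs.eventually_lt (hr_conv K) (hrIpos K)
    obtain ⟨N, hN⟩ := eventually_atTop.1 (h1.and h2)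
    refine ⟨N, fun n hn => ?_⟩
    obtain ⟨hn1, hn2⟩ := hN n hn
    rw [Real.dist_eq, sub_zero, abs_of_nonneg (hcnonneg n _)]
    exact lt_of_le_of_lt (hcle n K _ hn2) hn1
  -- main
  intro t ht tseq htseq_nonneg htseq
  rcases ht.eq_or_lt with h0 | hpos
  · -- t = 0
    subst h0
    have hLL : Function.leftLim cI 0 = 0 := by
      refine leftLim_eq_of_tendsto ?_
      refine tendsto_const_nhds.congr' ?_
      filter_upwards [eventually_nhdsWithin_of_forall
        (fun x (hx : x ∈ Set.Iio (0:ℝ)) => hcI0 x hx.le)] with x hx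
      exact hx.symm
    have hv : cI 0 = 0 := hcI0 0 le_rfl
    rw [hv, hLL]
    refine ⟨?_, ?_, ?_⟩
    · simpa [min_self] using (hzero tseq htseq).abs
    · exact fun _ sseq _ hss => hzero sseq hss
    · exact fun _ sseq _ hss => hzero sseq hss
  · -- t > 0
    obtain ⟨k, hk1, hk2⟩ : ∃ k : ℤ, t < rI k ∧ ∀ z : ℤ, t < rI z → z ≤ k := by
      refine Int.exists_greatest_of_bdd ?_ ?_
      · obtain ⟨N, hN⟩ := eventually_atTop.1 (hrI_top.eventually_lt_const hpos)
        exact ⟨N, fun z hz => by by_contra h; exact absurd (hN z (by omega)) (not_lt.2 hz.le)⟩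
      · exact (hrI_bot.eventually (eventually_gt_atTop t)).exists
    have hkle : rI (k+1) ≤ t := by
      by_contra h
      exact absurd (hk2 (k+1) (not_le.1 h)) (by omega)
    have hval : cI t = bI k := hcI k t hkle hk1
    rcases hkle.eq_or_lt with heq | hlt
    · -- jump case : t = rI (k+1)
      have hLL : Function.leftLim cI t = bI (k+1) := by
        have h2 : rI (k+1+1) < t := heq ▸ hrI_anti (lt_add_one (k+1))
        refine leftLim_eq_of_tendsto ?_
        refine tendsto_const_nhds.congr' ?_
        filter_upwards [Ioo_mem_nhdsLT_of_mem (Set.mem_Ioc.2 ⟨h2, le_rfl⟩)] with x hx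
        exact (hcI (k+1) x hx.1.le (heq ▸ hx.2)).symm
      rw [hval, hLL]
      have hsplit : ∀ s : ℕ → ℝ, Tendsto s atTop (𝓝 t) →
          ∀ᶠ n in atTop, (r n (k+1) ≤ s n → c n (s n) = b n k) ∧
            (s n < r n (k+1) → c n (s n) = b n (k+1)) := by
        intro s hs
        have h2 : rI (k+1+1) < t := heq ▸ hrI_anti (lt_add_one (k+1))
        filter_upwards [(hr_conv (k+1+1)).eventually_lt hs h2,
          hs.eventually_lt (hr_conv k) hk1] with n hn1 hn2
        exact ⟨fun h => hc n k _ h hn2, fun h => hc n (k+1) _ hn1.le h⟩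
      refine ⟨?_, ?_, ?_⟩
      · -- part (a)
        refine squeeze_zero' (g := fun n => max |b n k - bI k| |b n (k+1) - bI (k+1)|)
          (.of_forall fun n => le_min (abs_nonneg _) (abs_nonneg _))
          ((hsplit tseq htseq).mono ?_) ?_
        · intro n hn
          rcases le_or_gt (r n (k+1)) (tseq n) with h | h
          · rw [hn.1 h]; exact le_trans (min_le_left _ _) (le_max_left _ _)
          · rw [hn.2 h]; exact le_trans (min_le_right _ _) (le_max_right _ _)
        · have h1 : Tendsto (fun n => |b n k - bI k|) atTop (𝓝 0) := by
            simpa using ((hb_conv k).sub_const (bI k)).abs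
          have h2 : Tendsto (fun n => |b n (k+1) - bI (k+1)|) atTop (𝓝 0) := by
            simpa using ((hb_conv (k+1)).sub_const (bI (k+1))).abs
          simpa using h1.max h2
      · -- part (b)
        intro hcon sseq hle hss
        refine tendsto_of_eventually_or ?_ (hb_conv k) hcon
        filter_upwards [hsplit tseq htseq, hsplit sseq hss] with n hnt hns
        rcases le_or_gt (r n (k+1)) (sseq n) with h | h
        · exact Or.inl (hns.1 h)
        · exact Or.inr ((hns.2 h).trans (hnt.2 (lt_of_le_of_lt (hle n) h)).symm)
      · -- part (c)
        intro hcon sseq hle hss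
        refine tendsto_of_eventually_or ?_ (hb_conv (k+1)) hcon
        filter_upwards [hsplit tseq htseq, hsplit sseq hss] with n hnt hns
        rcases le_or_gt (r n (k+1)) (sseq n) with h | h
        · exact Or.inr ((hns.1 h).trans (hnt.1 (le_trans h (hle n))).symm)
        · exact Or.inl (hns.2 h)
    · -- continuity case : rI (k+1) < t
      have hLL : Function.leftLim cI t = bI k := by
        refine leftLim_eq_of_tendsto ?_
        refine tendsto_const_nhds.congr' ?_
        filter_upwards [Ioo_mem_nhdsLT_of_mem (Set.mem_Ioc.2 ⟨hlt, le_rfl⟩)] with x hx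
        exact (hcI k x hx.1.le (hx.2.trans hk1)).symm
      rw [hval, hLL]
      have hconv : ∀ s : ℕ → ℝ, Tendsto s atTop (𝓝 t) →
          Tendsto (fun n => c n (s n)) atTop (𝓝 (bI k)) := by
        intro s hs
        refine (hb_conv k).congr' ?_
        filter_upwards [(hr_conv (k+1)).eventually_lt hs hlt,
          hs.eventually_lt (hr_conv k) hk1] with n hn1 hn2
        exact (hc n k _ hn1.le hn2).symm
      refine ⟨?_, ?_, ?_⟩
      · simpa [min_self] using ((hconv tseq htseq).sub_const (bI k)).abs
      · exact fun _ sseq _ hss => hconv sseq hss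
      · exact fun _ sseq _ hss => hconv sseq hss
end
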